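/- arXiv:2505.05277 — 5 statements merged into one kernel-verified Lean document; each statement's English description precedes it below -/
import Mathlib

section
/- Let d ≥ 2 and let Ω ⊆ ℝ^d be an open, bounded, nonempty set. Then the infimum of λ₁^g(Ω) over all g ∈ L^∞_+ equals λ₁(Ω), i.e. inf{ λ₁^g(Ω) : g measurable, 0 < g(x) ≤ 1 for a.e. x ∈ ℝ^d } = λ₁(Ω). -/
open MeasureTheory Metric Set Filter
open scoped Classical ENNReal NNReal
noncomputable section
variable {d : ℕ}
abbrev E (d : ℕ) := EuclideanSpace ℝ (Fin d)

lemma norm_gradient_eq (u : E d → ℝ) (x : E d) : ‖gradient u x‖ = ‖fderiv ℝ u x‖ := by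
  rw [gradient]
  exact LinearIsometryEquiv.norm_map _ _

lemma grad_norm_le {K : ℝ≥0} {u : E d → ℝ} (h : LipschitzWith K u) (x : E d) :
    ‖gradient u x‖ ≤ K := by
  rw [norm_gradient_eq]
  exact norm_fderiv_le_of_lipschitz ℝ h

lemma grad_zero_of_eventually_zero {u : E d → ℝ} {x : E d}
    (h : u =ᶠ[nhds x] fun _ => (0:ℝ)) : gradient u x = 0 := by
  rw [gradient, Filter.EventuallyEq.fderiv_eq h, fderiv_const_apply]
  simp

/-- spike function -/
def spike (c : E d) (r : ℝ) : E d → ℝ := fun x => max (r - dist x c) 0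

lemma spike_lip (c : E d) (r : ℝ) : LipschitzWith 1 (spike c r) := by
  apply LipschitzWith.of_dist_le_mul
  intro x y
  simp only [spike, Real.dist_eq, NNReal.coe_one, one_mul]
  calc |max (r - dist x c) 0 - max (r - dist y c) 0| ≤ |(r - dist x c) - (r - dist y c)| :=
        abs_max_sub_max_le_abs _ _ _
    _ = |dist x c - dist y c| := by rw [← abs_neg]; ring_nf
    _ ≤ dist x y := abs_dist_sub_le x y c

lemma spike_nonneg (c : E d) (r : ℝ) (x : E d) : 0 ≤ spike c r x := le_max_right _ _

lemma spike_le (c : E d) (r : ℝ) (x : E d) (hr : 0 ≤ r) : spike c r x ≤ r := by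
  simp only [spike]
  have : r - dist x c ≤ r := by have := dist_nonneg (x := x) (y := c); linarith
  exact max_le this hr

lemma spike_self (c : E d) (r : ℝ) (hr : 0 ≤ r) : spike c r c = r := by
  simp [spike, hr]

lemma spike_zero_outside (c : E d) (r : ℝ) {x : E d} (h : r ≤ dist x c) : spike c r x = 0 := by
  simp only [spike]
  have : r - dist x c ≤ 0 := by linarith
  exact max_eq_right this

lemma spike_cont (c : E d) (r : ℝ) : Continuous (spike c r) := (spike_lip c r).continuous

lemma spike_grad_zero (c : E d) {r : ℝ} (hr : 0 < r) {x : E d} (h : x ∉ closedBall c r) :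
    gradient (spike c r) x = 0 := by
  apply grad_zero_of_eventually_zero
  have hopen : IsOpen (closedBall c r)ᶜ := isClosed_closedBall.isOpen_compl
  filter_upwards [hopen.mem_nhds h] with y hy
  exact spike_zero_outside c r (by simpa [mem_closedBall, not_le] using (le_of_lt (by simpa [mem_closedBall, not_lt] using hy)))

lemma grad_measurable (u : E d → ℝ) : Measurable (fun x => ‖gradient u x‖ ^ 2) := by
  have h1 : Measurable (fderiv ℝ u) := measurable_fderiv ℝ u
  have h2 : Measurable (gradient u) := by
    have : Continuous (InnerProductSpace.toDual ℝ (E d)).symm := (InnerProductSpace.toDual ℝ (E d)).symm.continuous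
    exact this.measurable.comp h1
  exact (h2.norm.pow_const 2)

lemma energy_integrable {u : E d → ℝ} {K : ℝ≥0} (h : LipschitzWith K u)
    {s : Set (E d)} (hs : IsCompact s) (h0 : ∀ x ∉ s, u x = 0) :
    Integrable (fun x => ‖gradient u x‖ ^ 2) := by
  have hbound : ∀ x, ‖gradient u x‖ ^ 2 ≤ s.indicator (fun _ => (K:ℝ)^2) x := by
    intro x
    by_cases hx : x ∈ s
    · rw [indicator_of_mem hx]
      exact pow_le_pow_left₀ (norm_nonneg _) (grad_norm_le h x) 2
    · rw [indicator_of_notMem hx]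
      have : gradient u x = 0 := by
        apply grad_zero_of_eventually_zero
        filter_upwards [hs.isClosed.isOpen_compl.mem_nhds hx] with y hy
        exact h0 y hy
      simp [this]
  apply Integrable.mono' ((integrable_indicator_iff hs.measurableSet).2 ?_)
    (grad_measurable u).aestronglyMeasurable
    (Filter.Eventually.of_forall (fun x => by
      simpa [abs_of_nonneg (sq_nonneg (‖gradient u x‖))] using hbound x))
  · exact (integrableOn_const_iff).2 (Or.inr hs.measure_lt_top)

lemma compactSupport_of_zero_outside {u : E d → ℝ} {s : Set (E d)}
    (hs : Bornology.IsBounded s) (h0 : ∀ x ∉ s, u x = 0) : HasCompactSupport u := by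
  have : Function.support u ⊆ closure s := by
    intro x hx
    by_contra hxs
    exact hx (h0 x (fun hmem => hxs (subset_closure hmem)))
  exact HasCompactSupport.of_support_subset_isCompact
    (hs.isCompact_closure) this
/-- The Rayleigh quotient of `u : ℝ^d → ℝ`. -/
def rayleigh (d : ℕ) (u : EuclideanSpace ℝ (Fin d) → ℝ) : ℝ :=
  (∫ x, ‖gradient u x‖ ^ 2) / (∫ x, (u x) ^ 2)

/-- A trial function for the Dirichlet eigenvalue on `Ω`: Lipschitz, vanishing outside `Ω`,
and not almost everywhere zero. -/
def IsDirTrial (d : ℕ) (Ω : Set (EuclideanSpace ℝ (Fin d)))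
    (u : EuclideanSpace ℝ (Fin d) → ℝ) : Prop :=
  (∃ K, LipschitzWith K u) ∧ (∀ x ∉ Ω, u x = 0) ∧ ¬ (u =ᵐ[volume] fun _ => (0 : ℝ))

/-- The first Dirichlet eigenvalue of `Ω`. -/
def dirichletEV (d : ℕ) (Ω : Set (EuclideanSpace ℝ (Fin d))) : ℝ :=
  sInf { r | ∃ u, IsDirTrial d Ω u ∧ rayleigh d u = r }

/-- The first twisted eigenvalue of `Ω` with orthogonality constraint `g`. -/
def twistedEV (d : ℕ) (Ω : Set (EuclideanSpace ℝ (Fin d)))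
    (g : EuclideanSpace ℝ (Fin d) → ℝ) : ℝ :=
  sInf { r | ∃ u, IsDirTrial d Ω u ∧ (∫ x, u x * g x) = 0 ∧ rayleigh d u = r }

/-- `u` is a minimizer for the first twisted eigenvalue `λ₁^g(Ω)`. -/
def IsTwistedMin (d : ℕ) (Ω : Set (EuclideanSpace ℝ (Fin d)))
    (g u : EuclideanSpace ℝ (Fin d) → ℝ) : Prop :=
  IsDirTrial d Ω u ∧ (∫ x, u x * g x) = 0 ∧ rayleigh d u = twistedEV d Ω g

/-- The bang-bang function equal to `1` on `Bm` and `α` elsewhere. -/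
def chiBang (d : ℕ) (α : ℝ) (Bm : Set (EuclideanSpace ℝ (Fin d))) :
    EuclideanSpace ℝ (Fin d) → ℝ :=
  fun x => if x ∈ Bm then 1 else α

lemma rayleigh_nonneg (u : E d → ℝ) : 0 ≤ rayleigh d u :=
  div_nonneg (integral_nonneg fun x => sq_nonneg _) (integral_nonneg fun x => sq_nonneg _)

lemma sq_integrable {u : E d → ℝ} (hc : Continuous u) (hcs : HasCompactSupport u) :
    Integrable (fun x => u x ^ 2) :=
  Continuous.integrable_of_hasCompactSupport (f := fun x => u x ^ 2) (hc.pow 2)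
    (hcs.comp_left (g := fun t : ℝ => t ^ 2) (by simp))

lemma sq_integral_pos {u : E d → ℝ} (hc : Continuous u) (hcs : HasCompactSupport u)
    (hne : ¬ (u =ᵐ[volume] fun _ => (0:ℝ))) : 0 < ∫ x, u x ^ 2 := by
  rw [integral_pos_iff_support_of_nonneg (fun x => sq_nonneg _) (sq_integrable hc hcs)]
  have hsup : Function.support (fun x => u x ^ 2) = Function.support u := by
    ext x; simp [Function.mem_support, pow_eq_zero_iff]
  rw [hsup]
  have : volume (Function.support u) ≠ 0 := by
    intro h0
    exact hne (by
      have : ∀ᵐ x, u x = 0 := by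
        rw [MeasureTheory.ae_iff]
        simpa [Function.support] using h0
      exact this)
  exact pos_iff_ne_zero.2 this

lemma grad_sub_ae {u v : E d → ℝ} {K K' : ℝ≥0} (hu : LipschitzWith K u)
    (hv : LipschitzWith K' v) (t : ℝ) :
    ∀ᵐ x, gradient (fun y => u y - t * v y) x = gradient u x - t • gradient v x := by
  filter_upwards [hu.ae_differentiableAt (μ := volume), hv.ae_differentiableAt (μ := volume)]
    with x hxu hxv
  have h1 : fderiv ℝ (fun y => u y - t * v y) x = fderiv ℝ u x - t • fderiv ℝ v x := by
    rw [fderiv_fun_sub hxu (hxv.const_mul t), fderiv_const_mul hxv t]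
  simp only [gradient, h1, map_sub, _root_.map_smul]

lemma pospart_integrable {w : E d → ℝ} (hc : Continuous w) (hcs : HasCompactSupport w) :
    Integrable (fun x => max (w x) 0) :=
  (hc.max continuous_const).integrable_of_hasCompactSupport
    (hcs.comp_left (g := fun t : ℝ => max t 0) (by simp))

lemma pospart_integral_pos {w : E d → ℝ} (hc : Continuous w) (hcs : HasCompactSupport w)
    {x₀ : E d} (h : 0 < w x₀) : 0 < ∫ x, max (w x) 0 := by
  rw [integral_pos_iff_support_of_nonneg (f := fun x => max (w x) 0) (fun x => le_max_right _ _)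
    (pospart_integrable hc hcs)]
  have hop : IsOpen {x | 0 < w x} := isOpen_lt continuous_const hc
  have hsub : {x | 0 < w x} ⊆ Function.support (fun x => max (w x) 0) := by
    intro x hx
    simp only [Function.mem_support]
    have : (0:ℝ) < max (w x) 0 := lt_max_iff.2 (Or.inl hx)
    exact ne_of_gt this
  calc (0:ℝ≥0∞) < volume {x | 0 < w x} := hop.measure_pos volume ⟨x₀, h⟩
    _ ≤ _ := measure_mono hsub

lemma not_ae_zero_of_ne {v : E d → ℝ} (hc : Continuous v) {p : E d} (hp : v p ≠ 0) :
    ¬ (v =ᵐ[volume] fun _ => (0:ℝ)) := by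
  intro h
  have hopen : IsOpen {x | v x ≠ 0} := isOpen_compl_singleton.preimage hc
  have hpos : (0:ℝ≥0∞) < volume {x | v x ≠ 0} := hopen.measure_pos volume ⟨p, hp⟩
  have h2 : volume {x | v x ≠ 0} = 0 := by
    have := MeasureTheory.ae_iff.1 h
    simpa using this
  exact hpos.ne' h2

lemma volume_cball_le (hd : 1 ≤ d) {x₀ : E d} {r : ℝ} (h0 : 0 ≤ r) (h1 : r ≤ 1) :
    (volume (closedBall x₀ r)).toReal ≤ r * ((volume (ball (0 : E d) 1)).toReal + 1) := by
  rw [Measure.addHaar_closedBall _ _ h0]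
  rw [ENNReal.toReal_mul, ENNReal.toReal_ofReal (pow_nonneg h0 _)]
  have hfr : Module.finrank ℝ (E d) = d := finrank_euclideanSpace_fin
  rw [hfr]
  have hpow : r ^ d ≤ r := by
    calc r ^ d ≤ r ^ 1 := pow_le_pow_of_le_one h0 h1 hd
      _ = r := pow_one r
  have hvol : (0:ℝ) ≤ (volume (ball (0 : E d) 1)).toReal := ENNReal.toReal_nonneg
  nlinarith [pow_nonneg h0 d]

lemma exists_spike_center {Ω : Set (E d)} (hΩo : IsOpen Ω) {y z₁ : E d}
    (hy : y ∈ Ω) (hz₁ : z₁ ∉ Ω) {r : ℝ} (hr : 0 < r)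
    (hrρ : 2 * r < infDist y Ωᶜ) :
    ∃ x₀ : E d, ball x₀ r ⊆ Ω ∧ ∃ z ∈ Ωᶜ, dist x₀ z < 3 * r := by
  have hne : Ωᶜ.Nonempty := ⟨z₁, hz₁⟩
  set f : ℝ → E d := fun s => y + s • (z₁ - y) with hf
  have hfc : Continuous fun s => infDist (f s) Ωᶜ := by
    apply (continuous_infDist_pt _).comp
    fun_prop
  have hf0 : infDist (f 0) Ωᶜ = infDist y Ωᶜ := by simp [hf]
  have hf1 : infDist (f 1) Ωᶜ = 0 := by
    have : f 1 = z₁ := by simp [hf]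
    rw [this]
    exact infDist_zero_of_mem hz₁
  have : (2*r) ∈ Icc (infDist (f 1) Ωᶜ) (infDist (f 0) Ωᶜ) := by
    rw [hf0, hf1]
    exact ⟨by linarith, le_of_lt hrρ⟩
  obtain ⟨s, _, hs'⟩ := intermediate_value_Icc' (zero_le_one) hfc.continuousOn this
  have hs : infDist (f s) Ωᶜ = 2 * r := hs'
  refine ⟨f s, ?_, ?_⟩
  · intro w hw
    by_contra hwΩ
    have h1 : infDist (f s) Ωᶜ ≤ dist (f s) w := infDist_le_dist_of_mem hwΩ
    have h2 : dist (f s) w < r := by rw [dist_comm]; exact hw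
    rw [hs] at h1
    linarith
  · have : infDist (f s) Ωᶜ < 3 * r := by rw [hs]; linarith
    exact (infDist_lt_iff hne).1 this

lemma spike_hcs {c : E d} {r : ℝ} (hr : 0 < r) : HasCompactSupport (spike c r) := by
  apply HasCompactSupport.of_support_subset_isCompact (isCompact_closedBall c r)
  intro x hx
  rw [Function.mem_support] at hx
  by_contra h
  exact hx (spike_zero_outside c r (le_of_lt (by simpa [mem_closedBall, not_le] using h)))

lemma spike_grad_bound {c : E d} {r : ℝ} (hr : 0 < r) (x : E d) :
    ‖gradient (spike c r) x‖ ^ 2 ≤ (closedBall c r).indicator (fun _ => (1:ℝ)) x := by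
  by_cases hx : x ∈ closedBall c r
  · rw [indicator_of_mem hx]
    have h := grad_norm_le (spike_lip c r) x
    simp only [NNReal.coe_one] at h
    nlinarith [norm_nonneg (gradient (spike c r) x)]
  · rw [indicator_of_notMem hx, spike_grad_zero c hr hx]
    simp

lemma spike_energy_le {c : E d} {r : ℝ} (hr : 0 < r) :
    ∫ x, ‖gradient (spike c r) x‖ ^ 2 ≤ (volume (closedBall c r)).toReal := by
  have hind : Integrable ((closedBall c r).indicator (fun _ => (1:ℝ))) :=
    (integrable_indicator_iff measurableSet_closedBall).2
      ((integrableOn_const_iff).2 (Or.inr measure_closedBall_lt_top))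
  have h1 : ∫ x, ‖gradient (spike c r) x‖ ^ 2 ≤ ∫ x, (closedBall c r).indicator (fun _ => (1:ℝ)) x :=
    integral_mono (energy_integrable (spike_lip c r) (isCompact_closedBall c r)
      (fun x hx => spike_zero_outside c r (le_of_lt (by simpa [mem_closedBall, not_le] using hx))))
      hind (spike_grad_bound hr)
  calc ∫ x, ‖gradient (spike c r) x‖ ^ 2 ≤ _ := h1
    _ = (volume (closedBall c r)).toReal := by
        rw [integral_indicator measurableSet_closedBall]
        simp [measureReal_def]

lemma spike_sq_le {c : E d} {r : ℝ} (hr : 0 < r) :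
    ∫ x, (spike c r x) ^ 2 ≤ r ^ 2 * (volume (closedBall c r)).toReal := by
  have hind : Integrable ((closedBall c r).indicator (fun _ => r ^ 2)) :=
    (integrable_indicator_iff measurableSet_closedBall).2
      ((integrableOn_const_iff).2 (Or.inr measure_closedBall_lt_top))
  have h1 : ∀ x, (spike c r x) ^ 2 ≤ (closedBall c r).indicator (fun _ => r ^ 2) x := by
    intro x
    by_cases hx : x ∈ closedBall c r
    · rw [indicator_of_mem hx]
      exact pow_le_pow_left₀ (spike_nonneg c r x) (spike_le c r x hr.le) 2
    · rw [indicator_of_notMem hx,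
        spike_zero_outside c r (le_of_lt (by simpa [mem_closedBall, not_le] using hx))]
      simp
  calc ∫ x, (spike c r x) ^ 2 ≤ ∫ x, (closedBall c r).indicator (fun _ => r ^ 2) x :=
      integral_mono (sq_integrable (spike_cont c r) (spike_hcs hr)) hind h1
    _ = r ^ 2 * (volume (closedBall c r)).toReal := by
        rw [integral_indicator measurableSet_closedBall]
        simp [mul_comm, measureReal_def]

lemma lip_sub_mul {u v : E d → ℝ} {K K' : ℝ≥0} (hu : LipschitzWith K u)
    (hv : LipschitzWith K' v) {t : ℝ} (ht : 0 ≤ t) :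
    LipschitzWith (K + ⟨t, ht⟩ * K') (fun x => u x - t * v x) := by
  apply LipschitzWith.of_dist_le_mul
  intro x y
  have h1 := hu.dist_le_mul x y
  have h2 := hv.dist_le_mul x y
  rw [Real.dist_eq] at h1 h2 ⊢
  have key : |(u x - t * v x) - (u y - t * v y)| ≤ |u x - u y| + t * |v x - v y| := by
    have : (u x - t * v x) - (u y - t * v y) = (u x - u y) + (-(t * (v x - v y))) := by ring
    rw [this]
    calc |(u x - u y) + (-(t * (v x - v y)))| ≤ |u x - u y| + |(-(t * (v x - v y)))| :=
        abs_add_le _ _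
      _ = |u x - u y| + t * |v x - v y| := by
          rw [abs_neg, abs_mul, abs_of_nonneg ht]
  have hcoe : ((K + ⟨t, ht⟩ * K' : ℝ≥0) : ℝ) = (K : ℝ) + t * (K' : ℝ) := by
    push_cast
    rfl
  rw [hcoe]
  have hd0 := dist_nonneg (x := x) (y := y)
  nlinarith [mul_le_mul_of_nonneg_left h2 ht]

lemma mul_g_integrable {v : E d → ℝ} (hc : Continuous v) (hcs : HasCompactSupport v)
    {g : E d → ℝ} (hgm : Measurable g) (hg1 : ∀ᵐ x, |g x| ≤ 1) :
    Integrable (fun x => v x * g x) := by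
  apply Integrable.mono' (hc.abs.integrable_of_hasCompactSupport
    (hcs.comp_left (g := fun t : ℝ => |t|) (abs_zero)))
    ((hc.measurable.mul hgm).aestronglyMeasurable)
  filter_upwards [hg1] with x hx
  rw [Real.norm_eq_abs, Pi.mul_apply, abs_mul]
  exact mul_le_of_le_one_right (abs_nonneg _) hx

lemma ratio_bound {N Dq N' D' η ε : ℝ} (hDq : 0 < Dq) (hN : 0 ≤ N) (hN' : 0 ≤ N')
    (hε : 0 ≤ ε) (hη0 : 0 ≤ η) (hη1 : η ≤ Dq / 2) (hη2 : 4 * (N + Dq) * η ≤ ε * Dq ^ 2)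
    (h1 : N' ≤ N + η) (h2 : Dq - η ≤ D') : N' / D' ≤ N / Dq + ε := by
  have hD'pos : 0 < D' := by linarith
  have hLnn : 0 ≤ N / Dq := div_nonneg hN hDq.le
  have hL : N / Dq * Dq = N := div_mul_cancel₀ N hDq.ne'
  have key : η * (Dq + N + ε * Dq) ≤ ε * Dq ^ 2 := by
    nlinarith [mul_le_mul_of_nonneg_right hη1 (mul_nonneg hε hDq.le)]
  rw [div_le_iff₀ hD'pos]
  have h3 : (N / Dq + ε) * (Dq - η) ≤ (N / Dq + ε) * D' :=
    mul_le_mul_of_nonneg_left h2 (add_nonneg hLnn hε)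
  have h4 : N + η ≤ (N / Dq + ε) * (Dq - η) := by
    have expand : (N / Dq + ε) * (Dq - η) = N - (N / Dq) * η + ε * Dq - ε * η := by
      have : (N / Dq + ε) * (Dq - η) = (N / Dq * Dq) - (N / Dq) * η + ε * Dq - ε * η := by ring
      rw [this, hL]
    rw [expand]
    have h5 : (N / Dq) * η * Dq = N * η := by
      calc (N / Dq) * η * Dq = (N / Dq * Dq) * η := by ring
        _ = N * η := by rw [hL]
    nlinarith [mul_pos hDq hDq]
  linarith

set_option maxHeartbeats 1000000 in
lemma core {Ω : Set (E d)} (hd : 1 ≤ d) (hΩo : IsOpen Ω) (hΩb : Bornology.IsBounded Ω)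
    {u : E d → ℝ} (hu : IsDirTrial d Ω u) {p : E d} (hp : 0 < u p) {ε : ℝ} (hε : 0 < ε) :
    ∃ u', IsDirTrial d Ω u' ∧ (0 < ∫ x, max (u' x) 0) ∧ (0 < ∫ x, max (-(u' x)) 0) ∧
      rayleigh d u' ≤ rayleigh d u + ε := by
  obtain ⟨⟨K, hK⟩, hout, hne⟩ := hu
  have hcont : Continuous u := hK.continuous
  have hy : p ∈ Ω := by
    by_contra h
    rw [hout p h] at hp
    exact lt_irrefl 0 hp
  obtain ⟨R, hR⟩ := (isBounded_iff_subset_closedBall (0 : E d)).1 hΩb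
  set z₁ : E d := EuclideanSpace.single (⟨0, hd⟩ : Fin d) (|R| + 1) with hz₁def
  have hz₁norm : ‖z₁‖ = |R| + 1 := by
    rw [hz₁def, EuclideanSpace.norm_single]
    rw [Real.norm_eq_abs, abs_of_nonneg (by positivity)]
  have hz₁ : z₁ ∉ Ω := by
    intro h
    have := hR h
    rw [mem_closedBall, dist_zero_right, hz₁norm] at this
    linarith [le_abs_self R]
  have hcs : HasCompactSupport u := compactSupport_of_zero_outside hΩb hout
  set A := ∫ x, max (u x) 0 with hAdef
  have hA : 0 < A := pospart_integral_pos hcont hcs hp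
  set ρ := infDist p Ωᶜ with hρdef
  have hρ : 0 < ρ := by
    rw [hρdef]
    exact ((hΩo.isClosed_compl.notMem_iff_infDist_pos ⟨z₁, hz₁⟩).1 (by simpa using hy))
  set Mu : ℝ := K * (|R| + ‖z₁‖) with hMudef
  have hMu0 : 0 ≤ Mu := by positivity
  have hMubound : ∀ x, |u x| ≤ Mu := by
    intro x
    by_cases hx : x ∈ Ω
    · have h1 : |u x - u z₁| ≤ K * dist x z₁ := by
        have := hK.dist_le_mul x z₁
        rwa [Real.dist_eq] at this
      rw [hout z₁ hz₁, sub_zero] at h1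
      have h2 : dist x z₁ ≤ ‖x‖ + ‖z₁‖ := by
        rw [dist_eq_norm]
        exact (norm_sub_le x z₁)
      have h3 : ‖x‖ ≤ |R| := by
        have := hR hx
        rw [mem_closedBall, dist_zero_right] at this
        exact le_trans this (le_abs_self R)
      calc |u x| ≤ K * dist x z₁ := h1
        _ ≤ K * (|R| + ‖z₁‖) := by
            apply mul_le_mul_of_nonneg_left _ (K.coe_nonneg)
            linarith
        _ = Mu := hMudef.symm
    · rw [hout x hx]
      simpa using hMu0
  set t : ℝ := 3 * (K : ℝ) + 1 with htdef
  have ht : 0 < t := by positivity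
  set N := ∫ x, ‖gradient u x‖ ^ 2 with hNdef
  have hN : 0 ≤ N := integral_nonneg fun x => sq_nonneg _
  set Dq := ∫ x, (u x) ^ 2 with hDqdef
  have hDq : 0 < Dq := sq_integral_pos hcont hcs hne
  set η := min (Dq / 2) (ε * Dq ^ 2 / (4 * (N + Dq))) with hηdef
  have hη : 0 < η := lt_min (by linarith)
    (div_pos (mul_pos hε (pow_pos hDq 2)) (by linarith))
  set δ := min (1/2 : ℝ) (η / (2 * (N + Dq + 1))) with hδdef
  have hδ : 0 < δ := lt_min (by norm_num) (div_pos hη (by linarith))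
  have hδhalf : δ ≤ 1/2 := min_le_left _ _
  have hδ2 : δ * (N + Dq + 1) ≤ η / 2 := by
    have h1 : δ ≤ η / (2 * (N + Dq + 1)) := min_le_right _ _
    have h2 : (0:ℝ) < N + Dq + 1 := by linarith
    calc δ * (N + Dq + 1) ≤ (η / (2 * (N + Dq + 1))) * (N + Dq + 1) :=
        mul_le_mul_of_nonneg_right h1 h2.le
      _ = η / 2 := by field_simp
  set V1 : ℝ := (volume (ball (0 : E d) 1)).toReal + 1 with hV1def
  have hV1 : 0 < V1 := by
    have := ENNReal.toReal_nonneg (a := volume (ball (0 : E d) 1))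
    linarith
  set cE : ℝ := (1 + δ⁻¹) * t ^ 2 with hcEdef
  have hcE : 0 < cE := mul_pos (by linarith [inv_pos.2 hδ]) (pow_pos ht 2)
  set r := min 1 (min (ρ/3) (min (η / (2 * cE * V1)) (A / (2 * (Mu + t + 1) * V1)))) with hrdef
  clear_value z₁ A ρ Mu t N Dq η δ V1 cE r
  have hr : 0 < r := by
    rw [hrdef]
    apply lt_min one_pos
    apply lt_min (by linarith)
    exact lt_min (div_pos hη (mul_pos (mul_pos two_pos hcE) hV1))
      (div_pos hA (mul_pos (mul_pos two_pos (by linarith)) hV1))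
  have hr1 : r ≤ 1 := by rw [hrdef]; exact min_le_left _ _
  have hrρ : 2 * r < ρ := by
    have : r ≤ ρ/3 := by
      rw [hrdef]; exact le_trans (min_le_right _ _) (min_le_left _ _)
    linarith
  have hrE : cE * (r * V1) ≤ η / 2 := by
    have h1 : r ≤ η / (2 * cE * V1) := by
      rw [hrdef]
      exact le_trans (min_le_right _ _) (le_trans (min_le_right _ _) (min_le_left _ _))
    have h2 : (0:ℝ) < 2 * cE * V1 := mul_pos (mul_pos two_pos hcE) hV1
    have h3 : r * (2 * cE * V1) ≤ η := (le_div_iff₀ h2).1 h1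
    have h4 : cE * (r * V1) * 2 = r * (2 * cE * V1) := by ring
    linarith
  have hrA : (Mu + t + 1) * (r * V1) ≤ A / 2 := by
    have h1 : r ≤ A / (2 * (Mu + t + 1) * V1) := by
      rw [hrdef]
      exact le_trans (min_le_right _ _) (le_trans (min_le_right _ _) (min_le_right _ _))
    have h2 : (0:ℝ) < Mu + t + 1 := by linarith
    have h3 : (0:ℝ) < 2 * (Mu + t + 1) * V1 := mul_pos (mul_pos two_pos h2) hV1
    have h4 : r * (2 * (Mu + t + 1) * V1) ≤ A := (le_div_iff₀ h3).1 h1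
    have h5 : (Mu + t + 1) * (r * V1) * 2 = r * (2 * (Mu + t + 1) * V1) := by ring
    linarith
  have hη1 : η ≤ Dq / 2 := by rw [hηdef]; exact min_le_left _ _
  have hη2' : η * (4 * (N + Dq)) ≤ ε * Dq ^ 2 :=
    (le_div_iff₀ (by linarith)).1 (by rw [hηdef]; exact min_le_right _ _)
  have hcE2 : δ⁻¹ * t ^ 2 ≤ cE := by
    rw [hcEdef]
    nlinarith [sq_nonneg t]
  obtain ⟨x₀, hball, z, hz, hdistz⟩ := exists_spike_center hΩo hy hz₁ hr (hρdef ▸ hrρ)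
  set φ := spike x₀ r with hφdef
  set Vr := (volume (closedBall x₀ r)).toReal with hVrdef
  have hVr0 : 0 ≤ Vr := by rw [hVrdef]; exact ENNReal.toReal_nonneg
  have hVrle : Vr ≤ r * V1 := by
    rw [hVrdef, hV1def]; exact volume_cball_le hd hr.le hr1
  set u' : E d → ℝ := fun x => u x - t * φ x with hu'def
  clear_value φ Vr u'
  have hu'lip : LipschitzWith (K + ⟨t, ht.le⟩ * 1) u' := by
    rw [hu'def, hφdef]
    exact lip_sub_mul hK (spike_lip x₀ r) ht.le
  have hφout : ∀ x ∉ Ω, φ x = 0 := by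
    intro x hx
    rw [hφdef]
    apply spike_zero_outside
    by_contra h
    push_neg at h
    exact hx (hball (by rwa [mem_ball]))
  have hu'out : ∀ x ∉ Ω, u' x = 0 := by
    intro x hx
    rw [hu'def]
    simp only
    rw [hout x hx, hφout x hx]
    ring
  have hu'cont : Continuous u' := hu'lip.continuous
  have hu'cs : HasCompactSupport u' := compactSupport_of_zero_outside hΩb hu'out
  have hux₀ : |u x₀| ≤ 3 * K * r := by
    have h1 : |u x₀ - u z| ≤ K * dist x₀ z := by
      have := hK.dist_le_mul x₀ z
      rwa [Real.dist_eq] at this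
    rw [hout z hz, sub_zero] at h1
    calc |u x₀| ≤ K * dist x₀ z := h1
      _ ≤ K * (3 * r) := mul_le_mul_of_nonneg_left hdistz.le (K.coe_nonneg)
      _ = 3 * K * r := by ring
  have hx₀neg : u' x₀ < 0 := by
    rw [hu'def]
    simp only
    rw [hφdef, spike_self x₀ r hr.le]
    have h1 : u x₀ ≤ 3 * K * r := le_trans (le_abs_self _) hux₀
    have h2 : t * r = 3 * K * r + r := by rw [htdef]; ring
    linarith
  have hne' : ¬ (u' =ᵐ[volume] fun _ => (0:ℝ)) := not_ae_zero_of_ne hu'cont (ne_of_lt hx₀neg)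
  have hnegcs : HasCompactSupport (fun x => -(u' x)) :=
    compactSupport_of_zero_outside hΩb (fun x hx => neg_eq_zero.2 (hu'out x hx))
  have hB' : 0 < ∫ x, max (-(u' x)) 0 :=
    pospart_integral_pos hu'cont.neg hnegcs (by simpa using hx₀neg)
  -- positive part lower bound
  have hA' : 0 < ∫ x, max (u' x) 0 := by
    have hptwise : ∀ x, max (u x) 0 - (closedBall x₀ r).indicator (fun _ => Mu + t * r) x
        ≤ max (u' x) 0 := by
      intro x
      by_cases hx : x ∈ closedBall x₀ r
      · rw [indicator_of_mem hx]
        have h1 : max (u x) 0 ≤ Mu := by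
          apply max_le (le_trans (le_abs_self _) (hMubound x)) hMu0
        have h2 : (0:ℝ) ≤ max (u' x) 0 := le_max_right _ _
        linarith only [h1, h2, mul_nonneg ht.le hr.le]
      · rw [indicator_of_notMem hx]
        have hφx : φ x = 0 := by
          rw [hφdef]
          exact spike_zero_outside x₀ r
            (le_of_lt (by simpa [mem_closedBall, not_le] using hx))
        rw [hu'def]
        simp only [hφx, mul_zero, sub_zero]
        simp
    have hind : Integrable ((closedBall x₀ r).indicator (fun _ => Mu + t * r)) :=
      (integrable_indicator_iff measurableSet_closedBall).2
        ((integrableOn_const_iff).2 (Or.inr measure_closedBall_lt_top))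
    have hmono : ∫ x, (max (u x) 0 - (closedBall x₀ r).indicator (fun _ => Mu + t * r) x)
        ≤ ∫ x, max (u' x) 0 :=
      integral_mono ((pospart_integrable hcont hcs).sub hind)
        (pospart_integrable hu'cont hu'cs) hptwise
    have hcomp : ∫ x, (max (u x) 0 - (closedBall x₀ r).indicator (fun _ => Mu + t * r) x)
        = A - (Mu + t * r) * Vr := by
      rw [integral_sub (pospart_integrable hcont hcs) hind, integral_indicator
        measurableSet_closedBall, setIntegral_const, smul_eq_mul, measureReal_def, ← hAdef, ← hVrdef]
      ring
    have hsmall : (Mu + t * r) * Vr < A := by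
      have h1 : Mu + t * r ≤ Mu + t + 1 := by
        linarith [mul_le_of_le_one_right ht.le hr1]
      have h2 : (Mu + t * r) * Vr ≤ (Mu + t + 1) * (r * V1) := by
        apply mul_le_mul h1 hVrle hVr0 (by linarith)
      linarith
    linarith only [hmono, hcomp, hsmall]
  refine ⟨u', ⟨⟨_, hu'lip⟩, hu'out, hne'⟩, hA', hB', ?_⟩
  -- Rayleigh quotient bound
  have hgradae : ∀ᵐ x, gradient u' x = gradient u x - t • gradient (spike x₀ r) x := by
    rw [hu'def, hφdef]
    exact grad_sub_ae hK (spike_lip x₀ r) t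
  have houtc : ∀ x ∉ closure Ω, u x = 0 := fun x hx => hout x (fun h => hx (subset_closure h))
  have hu'outc : ∀ x ∉ closure Ω, u' x = 0 :=
    fun x hx => hu'out x (fun h => hx (subset_closure h))
  have hintu : Integrable (fun x => ‖gradient u x‖ ^ 2) :=
    energy_integrable hK hΩb.isCompact_closure houtc
  have hintφ : Integrable (fun x => ‖gradient (spike x₀ r) x‖ ^ 2) :=
    energy_integrable (spike_lip x₀ r) (isCompact_closedBall x₀ r)
      (fun x hx => spike_zero_outside x₀ r
        (le_of_lt (by simpa [mem_closedBall, not_le] using hx)))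
  have hintu' : Integrable (fun x => ‖gradient u' x‖ ^ 2) :=
    energy_integrable hu'lip hΩb.isCompact_closure hu'outc
  have keylem : ∀ a b : ℝ,
      2 * (a * (t * b)) ≤ δ * a ^ 2 + δ⁻¹ * (t * b) ^ 2 := by
    intro a b
    have h3 : 0 ≤ (δ * a - t * b) ^ 2 := sq_nonneg _
    have h4 : δ * (δ⁻¹ * (t * b) ^ 2) = (t * b) ^ 2 := by
      field_simp
    nlinarith only [hδ, h3, h4]
  have haeN : ∀ᵐ x, ‖gradient u' x‖ ^ 2 ≤
      (1 + δ) * ‖gradient u x‖ ^ 2 + cE * ‖gradient (spike x₀ r) x‖ ^ 2 := by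
    filter_upwards [hgradae] with x hx
    have h1 : ‖gradient u' x‖ ≤ ‖gradient u x‖ + t * ‖gradient (spike x₀ r) x‖ := by
      rw [hx]
      refine (norm_sub_le _ _).trans ?_
      rw [norm_smul, Real.norm_eq_abs, abs_of_nonneg ht.le]
    have h2 : ‖gradient u' x‖ ^ 2 ≤
        (‖gradient u x‖ + t * ‖gradient (spike x₀ r) x‖) ^ 2 :=
      pow_le_pow_left₀ (norm_nonneg _) h1 2
    have key := keylem ‖gradient u x‖ ‖gradient (spike x₀ r) x‖
    rw [hcEdef]
    nlinarith only [key, h2]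
  have hNbound : ∫ x, ‖gradient u' x‖ ^ 2 ≤ (1 + δ) * N + cE * Vr := by
    have h1 : ∫ x, ‖gradient u' x‖ ^ 2 ≤
        ∫ x, ((1 + δ) * ‖gradient u x‖ ^ 2 + cE * ‖gradient (spike x₀ r) x‖ ^ 2) :=
      integral_mono_ae hintu' ((hintu.const_mul _).add (hintφ.const_mul _)) haeN
    rw [integral_add (hintu.const_mul _) (hintφ.const_mul _), integral_const_mul _ _,
      integral_const_mul _ _, ← hNdef] at h1
    have h2 := spike_energy_le (c := x₀) hr
    rw [← hVrdef] at h2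
    have h3 : cE * (∫ x, ‖gradient (spike x₀ r) x‖ ^ 2) ≤ cE * Vr :=
      mul_le_mul_of_nonneg_left h2 hcE.le
    linarith
  have hNfin : ∫ x, ‖gradient u' x‖ ^ 2 ≤ N + η := by
    have e1 : cE * Vr ≤ cE * (r * V1) := mul_le_mul_of_nonneg_left hVrle hcE.le
    have e2 : δ * N ≤ δ * (N + Dq + 1) := mul_le_mul_of_nonneg_left (by linarith) hδ.le
    have e3 : (1 + δ) * N = N + δ * N := by ring
    linarith only [hNbound, e1, e2, e3, hrE, hδ2]
  -- denominator
  have haeD : ∀ x, (1 - δ) * (u x) ^ 2 - δ⁻¹ * t ^ 2 * (spike x₀ r x) ^ 2 ≤ (u' x) ^ 2 := by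
    intro x
    rw [hu'def, hφdef]
    simp only
    have key := keylem (u x) (spike x₀ r x)
    nlinarith only [key, sq_nonneg (t * spike x₀ r x)]
  have hintsqu : Integrable (fun x => (u x) ^ 2) := sq_integrable hcont hcs
  have hintsqφ : Integrable (fun x => (spike x₀ r x) ^ 2) :=
    sq_integrable (spike_cont x₀ r) (spike_hcs hr)
  have hintsqu' : Integrable (fun x => (u' x) ^ 2) := sq_integrable hu'cont hu'cs
  have hDbound : (1 - δ) * Dq - δ⁻¹ * t ^ 2 * (∫ x, (spike x₀ r x) ^ 2) ≤ ∫ x, (u' x) ^ 2 := by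
    have h1 : ∫ x, ((1 - δ) * (u x) ^ 2 - δ⁻¹ * t ^ 2 * (spike x₀ r x) ^ 2) ≤ ∫ x, (u' x) ^ 2 :=
      integral_mono ((hintsqu.const_mul _).sub (hintsqφ.const_mul _)) hintsqu' haeD
    rw [integral_sub (hintsqu.const_mul _) (hintsqφ.const_mul _), integral_const_mul _ _,
      integral_const_mul _ _, ← hDqdef] at h1
    exact h1
  have hDfin : Dq - η ≤ ∫ x, (u' x) ^ 2 := by
    have hSφ0 : 0 ≤ ∫ x, (spike x₀ r x) ^ 2 := integral_nonneg fun x => sq_nonneg _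
    have hSφ : ∫ x, (spike x₀ r x) ^ 2 ≤ r * V1 := by
      have h2 := spike_sq_le (c := x₀) hr
      rw [← hVrdef] at h2
      have h3 : r ^ 2 * Vr ≤ 1 * Vr := by
        apply mul_le_mul_of_nonneg_right _ hVr0
        nlinarith
      have h4 : (1:ℝ) * Vr = Vr := one_mul _
      linarith only [h2, h3, h4, hVrle]
    have h5 : δ⁻¹ * t ^ 2 * (∫ x, (spike x₀ r x) ^ 2) ≤ cE * (r * V1) := by
      apply mul_le_mul hcE2 hSφ hSφ0 hcE.le
    have e2 : δ * Dq ≤ δ * (N + Dq + 1) := mul_le_mul_of_nonneg_left (by linarith) hδ.le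
    have e3 : (1 - δ) * Dq = Dq - δ * Dq := by ring
    linarith only [hDbound, h5, e2, e3, hrE, hδ2]
  have hrayu : rayleigh d u = N / Dq := by rw [rayleigh, ← hNdef, ← hDqdef]
  have hrayu' : rayleigh d u' = (∫ x, ‖gradient u' x‖ ^ 2) / (∫ x, (u' x) ^ 2) := rfl
  rw [hrayu, hrayu']
  exact ratio_bound hDq hN (integral_nonneg fun x => sq_nonneg _) hε.le hη.le hη1
    (by linarith only [hη2']) hNfin hDfin

lemma dir_bddBelow (d : ℕ) (Ω : Set (E d)) :
    BddBelow {r | ∃ u, IsDirTrial d Ω u ∧ rayleigh d u = r} :=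
  ⟨0, fun r ⟨u, _, h⟩ => h ▸ rayleigh_nonneg u⟩

lemma tw_bddBelow (d : ℕ) (Ω : Set (E d)) (g : E d → ℝ) :
    BddBelow {r | ∃ u, IsDirTrial d Ω u ∧ (∫ x, u x * g x) = 0 ∧ rayleigh d u = r} :=
  ⟨0, fun r ⟨u, _, _, h⟩ => h ▸ rayleigh_nonneg u⟩

lemma twistedEV_nonneg (d : ℕ) (Ω : Set (E d)) (g : E d → ℝ) : 0 ≤ twistedEV d Ω g := by
  apply Real.sInf_nonneg
  rintro r ⟨u, _, _, h⟩
  exact h ▸ rayleigh_nonneg u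

lemma rayleigh_neg_eq (u : E d → ℝ) : rayleigh d (fun x => -u x) = rayleigh d u := by
  rw [rayleigh, rayleigh]
  congr 1
  · refine integral_congr_ae (Eventually.of_forall fun x => ?_)
    show ‖gradient (fun x => -u x) x‖ ^ 2 = ‖gradient u x‖ ^ 2
    rw [norm_gradient_eq, norm_gradient_eq, fderiv_fun_neg, norm_neg]
  · refine integral_congr_ae (Eventually.of_forall fun x => ?_)
    show (-u x) ^ 2 = (u x) ^ 2
    ring

lemma dirTrial_neg {Ω : Set (E d)} {u : E d → ℝ} (h : IsDirTrial d Ω u) :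
    IsDirTrial d Ω (fun x => -u x) := by
  obtain ⟨⟨K, hK⟩, hout, hne⟩ := h
  refine ⟨⟨K, ?_⟩, fun x hx => by show -u x = 0; rw [hout x hx, neg_zero], fun hc => hne ?_⟩
  · apply LipschitzWith.of_dist_le_mul
    intro x y
    have := hK.dist_le_mul x y
    rw [Real.dist_eq] at this ⊢
    have heq : -u x - -u y = -(u x - u y) := by ring
    rw [heq, abs_neg]
    exact this
  · filter_upwards [hc] with x hx
    have : -u x = 0 := by simpa using hx
    linarith

lemma trial_exists_sign {Ω : Set (E d)} {u : E d → ℝ} (hu : IsDirTrial d Ω u) :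
    (∃ p, 0 < u p) ∨ (∃ p, 0 < -u p) := by
  have hex : ∃ x, u x ≠ 0 := by
    by_contra h
    push_neg at h
    exact hu.2.2 (Eventually.of_forall h)
  obtain ⟨x, hx⟩ := hex
  rcases lt_or_gt_of_ne hx with h | h
  · exact Or.inr ⟨x, by linarith⟩
  · exact Or.inl ⟨x, h⟩

lemma exists_bangbang {Ω : Set (E d)} (hΩb : Bornology.IsBounded Ω) {u : E d → ℝ}
    (hu : IsDirTrial d Ω u) (hA : 0 < ∫ x, max (u x) 0) (hB : 0 < ∫ x, max (-(u x)) 0) :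
    ∃ g : E d → ℝ, Measurable g ∧ (∀ᵐ x, 0 < g x ∧ g x ≤ 1) ∧ (∫ x, u x * g x) = 0 := by
  obtain ⟨⟨K, hK⟩, hout, hne⟩ := hu
  have hcont : Continuous u := hK.continuous
  have hcs : HasCompactSupport u := compactSupport_of_zero_outside hΩb hout
  have hnegcs : HasCompactSupport (fun x => -(u x)) :=
    compactSupport_of_zero_outside hΩb (fun x hx => neg_eq_zero.2 (hout x hx))
  set A := ∫ x, max (u x) 0 with hAdef
  set B := ∫ x, max (-(u x)) 0 with hBdef
  set c₁ := min 1 (B / A) with hc₁def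
  set c₂ := min 1 (A / B) with hc₂def
  have hc₁pos : 0 < c₁ := lt_min one_pos (div_pos hB hA)
  have hc₂pos : 0 < c₂ := lt_min one_pos (div_pos hA hB)
  have hc₁le : c₁ ≤ 1 := min_le_left _ _
  have hc₂le : c₂ ≤ 1 := min_le_left _ _
  have hkey : c₁ * A - c₂ * B = 0 := by
    rcases le_total A B with h | h
    · have h1 : c₁ = 1 := by rw [hc₁def]; exact min_eq_left ((one_le_div hA).2 h)
      have h2 : c₂ = A / B := by rw [hc₂def]; exact min_eq_right ((div_le_one hB).2 h)
      rw [h1, h2, div_mul_cancel₀ _ hB.ne']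
      ring
    · have h1 : c₂ = 1 := by rw [hc₂def]; exact min_eq_left ((one_le_div hB).2 h)
      have h2 : c₁ = B / A := by rw [hc₁def]; exact min_eq_right ((div_le_one hA).2 h)
      rw [h1, h2, div_mul_cancel₀ _ hA.ne']
      ring
  refine ⟨fun x => if 0 ≤ u x then c₁ else c₂, ?_, ?_, ?_⟩
  · exact Measurable.ite (measurableSet_le measurable_const hcont.measurable)
      measurable_const measurable_const
  · apply Eventually.of_forall
    intro x
    by_cases h : 0 ≤ u x
    · simp only [h, if_true]
      exact ⟨hc₁pos, hc₁le⟩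
    · simp only [h, if_false]
      exact ⟨hc₂pos, hc₂le⟩
  · have hpt : ∀ x, u x * (if 0 ≤ u x then c₁ else c₂)
        = c₁ * max (u x) 0 - c₂ * max (-(u x)) 0 := by
      intro x
      by_cases h : 0 ≤ u x
      · rw [if_pos h, max_eq_left h, max_eq_right (by linarith : -(u x) ≤ 0)]
        ring
      · push_neg at h
        rw [if_neg (not_le.2 h), max_eq_right h.le, max_eq_left (by linarith : (0:ℝ) ≤ -(u x))]
        ring
    calc ∫ x, u x * (if 0 ≤ u x then c₁ else c₂)
        = ∫ x, (c₁ * max (u x) 0 - c₂ * max (-(u x)) 0) := by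
          exact integral_congr_ae (Eventually.of_forall hpt)
      _ = c₁ * A - c₂ * B := by
          rw [integral_sub ((pospart_integrable hcont hcs).const_mul c₁)
            ((pospart_integrable (w := fun x => -(u x)) hcont.neg hnegcs).const_mul c₂),
            integral_const_mul _ _, integral_const_mul _ _, ← hAdef, ← hBdef]
      _ = 0 := hkey

lemma twisted_nonempty {Ω : Set (E d)} (hd : 1 ≤ d) (hΩo : IsOpen Ω) (hΩn : Ω.Nonempty)
    {g : E d → ℝ} (hgm : Measurable g) (hg : ∀ᵐ x, 0 < g x ∧ g x ≤ 1) :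
    ∃ u, IsDirTrial d Ω u ∧ (∫ x, u x * g x) = 0 := by
  obtain ⟨y, hy⟩ := hΩn
  obtain ⟨ε, hε, hball⟩ := Metric.isOpen_iff.1 hΩo y hy
  set e : E d := EuclideanSpace.single (⟨0, hd⟩ : Fin d) (1:ℝ) with hedef
  have henorm : ‖e‖ = 1 := by rw [hedef, EuclideanSpace.norm_single]; simp
  set c₂ : E d := y + (ε/2) • e with hc₂def
  have hdist : dist y c₂ = ε/2 := by
    rw [hc₂def, dist_self_add_right, norm_smul, Real.norm_eq_abs,
      abs_of_nonneg (by linarith), henorm, mul_one]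
  set r' := ε/8 with hr'def
  have hr' : 0 < r' := by rw [hr'def]; linarith
  have hg1 : ∀ᵐ x, |g x| ≤ 1 := by
    filter_upwards [hg] with x ⟨h1, h2⟩
    rw [abs_of_nonneg h1.le]
    exact h2
  have hsub1 : ∀ x ∉ Ω, spike y r' x = 0 := by
    intro x hx
    apply spike_zero_outside
    by_contra h
    push_neg at h
    apply hx (hball _)
    rw [mem_ball]
    calc dist x y < r' := h
      _ < ε := by rw [hr'def]; linarith
  have hsub2 : ∀ x ∉ Ω, spike c₂ r' x = 0 := by
    intro x hx
    apply spike_zero_outside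
    by_contra h
    push_neg at h
    apply hx (hball _)
    rw [mem_ball]
    calc dist x y ≤ dist x c₂ + dist c₂ y := dist_triangle _ _ _
      _ < r' + ε/2 := by
          rw [dist_comm c₂ y, hdist]
          linarith
      _ < ε := by rw [hr'def]; linarith
  have hI2pos : 0 < ∫ x, spike c₂ r' x * g x := by
    rcases lt_or_ge 0 (∫ x, spike c₂ r' x * g x) with h | h
    · exact h
    have hnn : 0 ≤ᵐ[volume] fun x => spike c₂ r' x * g x := by
      filter_upwards [hg] with x ⟨h1, _⟩
      exact mul_nonneg (spike_nonneg _ _ _) h1.le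
    have hint : Integrable (fun x => spike c₂ r' x * g x) :=
      mul_g_integrable (spike_cont _ _) (spike_hcs hr') hgm hg1
    have hzero : (∫ x, spike c₂ r' x * g x) = 0 :=
      le_antisymm h (integral_nonneg_of_ae hnn)
    have hae0 : (fun x => spike c₂ r' x * g x) =ᵐ[volume] 0 :=
      (integral_eq_zero_iff_of_nonneg_ae hnn hint).1 hzero
    have hbad : ∀ᵐ x, x ∉ ball c₂ r' := by
      filter_upwards [hae0, hg] with x h0 ⟨h1, _⟩
      intro hmem
      have hs : 0 < spike c₂ r' x := by
        rw [mem_ball] at hmem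
        simp only [spike]
        exact lt_max_iff.2 (Or.inl (by linarith))
      have : spike c₂ r' x * g x = 0 := h0
      nlinarith
    have : volume (ball c₂ r') = 0 := by
      rw [← measure_eq_zero_iff_ae_notMem] at hbad
      exact hbad
    exact absurd this ((measure_ball_pos volume c₂ hr').ne')
  set I₁ := ∫ x, spike y r' x * g x with hI₁def
  have hI1nn : 0 ≤ I₁ := by
    apply integral_nonneg_of_ae
    filter_upwards [hg] with x ⟨h1, _⟩
    exact mul_nonneg (spike_nonneg _ _ _) h1.le
  set I₂ := ∫ x, spike c₂ r' x * g x with hI₂def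
  set t := I₁ / I₂ with htdef
  have ht : 0 ≤ t := div_nonneg hI1nn hI2pos.le
  refine ⟨fun x => spike y r' x - t * spike c₂ r' x, ⟨⟨_, lip_sub_mul (spike_lip y r')
    (spike_lip c₂ r') ht⟩, ?_, ?_⟩, ?_⟩
  · intro x hx
    show spike y r' x - t * spike c₂ r' x = 0
    rw [hsub1 x hx, hsub2 x hx]
    ring
  · have hval : spike y r' y - t * spike c₂ r' y = r' := by
      rw [spike_self y r' hr'.le, spike_zero_outside c₂ r' (by
        rw [hdist, hr'def]
        linarith), mul_zero, sub_zero]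
    have hcont' : Continuous (fun x => spike y r' x - t * spike c₂ r' x) :=
      (spike_cont y r').sub (continuous_const.mul (spike_cont c₂ r'))
    apply not_ae_zero_of_ne hcont' (p := y)
    show spike y r' y - t * spike c₂ r' y ≠ 0
    rw [hval]
    exact hr'.ne'
  · have : ∀ x, (spike y r' x - t * spike c₂ r' x) * g x
        = spike y r' x * g x - t * (spike c₂ r' x * g x) := by
      intro x; ring
    rw [integral_congr_ae (Eventually.of_forall this),
      integral_sub (mul_g_integrable (spike_cont _ _) (spike_hcs hr') hgm hg1)
        ((mul_g_integrable (spike_cont _ _) (spike_hcs hr') hgm hg1).const_mul t),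
      integral_const_mul _ _, ← hI₁def, ← hI₂def, htdef, div_mul_cancel₀ _ hI2pos.ne']
    ring

theorem stmt0' (d : ℕ) (hd : 2 ≤ d) (Ω : Set (EuclideanSpace ℝ (Fin d)))
    (hΩo : IsOpen Ω) (hΩb : Bornology.IsBounded Ω) (hΩn : Ω.Nonempty) :
    sInf { r : ℝ | ∃ g : EuclideanSpace ℝ (Fin d) → ℝ, Measurable g ∧
        (∀ᵐ x, 0 < g x ∧ g x ≤ 1) ∧ r = twistedEV d Ω g } = dirichletEV d Ω := by
  have hd1 : 1 ≤ d := le_trans one_le_two hd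
  have hone : ∀ᵐ x : E d, 0 < (fun _ => (1:ℝ)) x ∧ (fun _ => (1:ℝ)) x ≤ 1 :=
    Eventually.of_forall fun x => ⟨one_pos, le_refl 1⟩
  have hSbdd : BddBelow { r : ℝ | ∃ g : EuclideanSpace ℝ (Fin d) → ℝ, Measurable g ∧
      (∀ᵐ x, 0 < g x ∧ g x ≤ 1) ∧ r = twistedEV d Ω g } := by
    refine ⟨0, ?_⟩
    rintro r ⟨g', -, -, rfl⟩
    exact twistedEV_nonneg d Ω g'
  have hSne : { r : ℝ | ∃ g : EuclideanSpace ℝ (Fin d) → ℝ, Measurable g ∧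
      (∀ᵐ x, 0 < g x ∧ g x ≤ 1) ∧ r = twistedEV d Ω g }.Nonempty :=
    ⟨twistedEV d Ω (fun _ => 1), ⟨fun _ => 1, measurable_const, hone, rfl⟩⟩
  apply le_antisymm
  · -- sInf S ≤ dirichletEV
    apply le_of_forall_pos_le_add
    intro ε hε
    have hDne : {r | ∃ u, IsDirTrial d Ω u ∧ rayleigh d u = r}.Nonempty := by
      obtain ⟨u, hu, -⟩ := twisted_nonempty hd1 hΩo hΩn measurable_const hone
      exact ⟨rayleigh d u, u, hu, rfl⟩
    have hlt : ∃ a ∈ {r | ∃ u, IsDirTrial d Ω u ∧ rayleigh d u = r},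
        a < dirichletEV d Ω + ε/2 := by
      rw [dirichletEV]
      exact Real.lt_sInf_add_pos hDne (by linarith)
    obtain ⟨a, ⟨u, hu, rfl⟩, hlt⟩ := hlt
    obtain ⟨u₁, hu₁, hpos₁, hray₁⟩ : ∃ u₁, IsDirTrial d Ω u₁ ∧ (∃ p, 0 < u₁ p) ∧
        rayleigh d u₁ = rayleigh d u := by
      rcases trial_exists_sign hu with ⟨p, hp⟩ | ⟨p, hp⟩
      · exact ⟨u, hu, ⟨p, hp⟩, rfl⟩
      · exact ⟨fun x => -u x, dirTrial_neg hu, ⟨p, hp⟩, rayleigh_neg_eq u⟩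
    obtain ⟨p, hp⟩ := hpos₁
    obtain ⟨u', hu', hA', hB', hray'⟩ := core hd1 hΩo hΩb hu₁ hp (show (0:ℝ) < ε/2 by linarith)
    obtain ⟨g, hgm, hg, horth⟩ := exists_bangbang hΩb hu' hA' hB'
    have h1 : twistedEV d Ω g ≤ rayleigh d u' := by
      rw [twistedEV]
      exact csInf_le (tw_bddBelow d Ω g) ⟨u', hu', horth, rfl⟩
    have h2 : sInf { r : ℝ | ∃ g : EuclideanSpace ℝ (Fin d) → ℝ, Measurable g ∧
        (∀ᵐ x, 0 < g x ∧ g x ≤ 1) ∧ r = twistedEV d Ω g } ≤ twistedEV d Ω g :=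
      csInf_le hSbdd ⟨g, hgm, hg, rfl⟩
    rw [hray₁] at hray'
    linarith
  · -- dirichletEV ≤ sInf S
    apply le_csInf hSne
    rintro b ⟨g, hgm, hg, rfl⟩
    rw [twistedEV]
    apply le_csInf
    · obtain ⟨u, hu, h0⟩ := twisted_nonempty hd1 hΩo hΩn hgm hg
      exact ⟨rayleigh d u, u, hu, h0, rfl⟩
    · rintro b' ⟨u, hu, h0, rfl⟩
      rw [dirichletEV]
      exact csInf_le (dir_bddBelow d Ω) ⟨u, hu, rfl⟩

/-- the infimum of `λ₁^g(Ω)` over `g ∈ L^∞₊` equals `λ₁(Ω)`. -/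
theorem stmt0 (d : ℕ) (hd : 2 ≤ d) (Ω : Set (EuclideanSpace ℝ (Fin d)))
    (hΩo : IsOpen Ω) (hΩb : Bornology.IsBounded Ω) (hΩn : Ω.Nonempty) :
    sInf { r : ℝ | ∃ g : EuclideanSpace ℝ (Fin d) → ℝ, Measurable g ∧
        (∀ᵐ x, 0 < g x ∧ g x ≤ 1) ∧ r = twistedEV d Ω g } = dirichletEV d Ω :=
  stmt0' d hd Ω hΩo hΩb hΩn
end
end

section
/- Let d ≥ 2, let Ω ⊆ ℝ^d be open and bounded, let g ∈ L^∞_+, let λ, ξ ∈ ℝ, and let u : ℝ^d → ℝ be a Lipschitz function with u = 0 on ℝ^d \ Ω, u not a.e. zero, ∫_{ℝ^d} u g dx = 0, and satisfying ∫_{ℝ^d} ∇u·∇ψ dx = λ ∫_{ℝ^d} u ψ dx + ξ ∫_{ℝ^d} g ψ dx for every Lipschitz ψ : ℝ^d → ℝ with ψ = 0 on ℝ^d \ Ω. Then u⁺ := max(u,0) and u⁻ := max(−u,0) are both not a.e. zero, and R(u⁺) ≤ R(u⁻) if and only if ξ ≤ 0; moreover R(u⁺) = R(u⁻) if and only if ξ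 = 0. -/
open MeasureTheory Metric Set Filter

open scoped Classical ENNReal

noncomputable section

variable {d : ℕ}

set_option maxHeartbeats 1000000

lemma grad_neg (u : EuclideanSpace ℝ (Fin d) → ℝ) (x : EuclideanSpace ℝ (Fin d)) :
    gradient (fun y => -u y) x = -gradient u x := by
  unfold gradient
  rw [fderiv_fun_neg, map_neg]

lemma grad_pos_part_inner (u : EuclideanSpace ℝ (Fin d) → ℝ) (hu : Continuous u)
    (x : EuclideanSpace ℝ (Fin d)) :
    (inner ℝ (gradient u x) (gradient (fun y => max (u y) 0) x) : ℝ)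
      = ‖gradient (fun y => max (u y) 0) x‖ ^ 2 := by
  set v : EuclideanSpace ℝ (Fin d) → ℝ := fun y => max (u y) 0 with hv
  rcases lt_trichotomy (u x) 0 with h | h | h
  · have hev : v =ᶠ[nhds x] (fun _ => (0 : ℝ)) := by
      filter_upwards [(isOpen_Iio.preimage hu).mem_nhds (by simpa using h)] with y hy
      simp [v, le_of_lt (show u y < 0 from hy)]
    have hz : gradient v x = 0 := by
      unfold gradient
      rw [hev.fderiv_eq, fderiv_fun_const]
      simp
    simp [hz]
  · have hz : gradient v x = 0 := by
      by_cases hdiff : DifferentiableAt ℝ v x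
      · have hmin : IsLocalMin v x := by
          apply Filter.Eventually.of_forall
          intro y
          simp [v, h, le_max_right]
        unfold gradient
        rw [hmin.fderiv_eq_zero]
        simp
      · exact gradient_eq_zero_of_not_differentiableAt hdiff
    simp [hz]
  · have hev : v =ᶠ[nhds x] u := by
      filter_upwards [(isOpen_Ioi.preimage hu).mem_nhds (by simpa using h)] with y hy
      simp [v, max_eq_left (le_of_lt (show (0:ℝ) < u y from hy))]
    have hg : gradient v x = gradient u x := by
      unfold gradient
      rw [hev.fderiv_eq]
    rw [hg, real_inner_self_eq_norm_sq]

/-- the sign of the nonlocal multiplier `ξ` is characterized by the comparison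
between the Rayleigh quotients of the positive and negative parts of the eigenfunction. -/
theorem stmt7 (d : ℕ) (hd : 2 ≤ d) (Ω : Set (EuclideanSpace ℝ (Fin d)))
    (hΩo : IsOpen Ω) (hΩb : Bornology.IsBounded Ω)
    (g : EuclideanSpace ℝ (Fin d) → ℝ) (hgm : Measurable g)
    (hg : ∀ᵐ x, 0 < g x ∧ g x ≤ 1)
    (lam ξ : ℝ) (u : EuclideanSpace ℝ (Fin d) → ℝ)
    (hulip : ∃ K, LipschitzWith K u) (huz : ∀ x ∉ Ω, u x = 0)
    (hune : ¬ (u =ᵐ[volume] fun _ => (0 : ℝ)))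
    (huorth : (∫ x, u x * g x) = 0)
    (hweak : ∀ ψ : EuclideanSpace ℝ (Fin d) → ℝ, (∃ K, LipschitzWith K ψ) →
      (∀ x ∉ Ω, ψ x = 0) →
      (∫ x, (inner ℝ (gradient u x) (gradient ψ x) : ℝ)) =
        lam * (∫ x, u x * ψ x) + ξ * ∫ x, g x * ψ x) :
    ¬ ((fun x => max (u x) 0) =ᵐ[volume] fun _ => (0 : ℝ)) ∧
    ¬ ((fun x => max (-u x) 0) =ᵐ[volume] fun _ => (0 : ℝ)) ∧
    (rayleigh d (fun x => max (u x) 0) ≤ rayleigh d (fun x => max (-u x) 0) ↔ ξ ≤ 0) ∧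
    (rayleigh d (fun x => max (u x) 0) = rayleigh d (fun x => max (-u x) 0) ↔ ξ = 0) := by
  obtain ⟨K, hK⟩ := hulip
  set v : EuclideanSpace ℝ (Fin d) → ℝ := fun x => max (u x) 0 with hvdef
  set w : EuclideanSpace ℝ (Fin d) → ℝ := fun x => max (-u x) 0 with hwdef
  have hucont : Continuous u := hK.continuous
  have hKv : LipschitzWith K v := hK.max_const 0
  have hKw : LipschitzWith K w := hK.neg.max_const 0
  have hvz : ∀ x ∉ Ω, v x = 0 := fun x hx => by simp [v, huz x hx]
  have hwz : ∀ x ∉ Ω, w x = 0 := fun x hx => by simp [w, huz x hx]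
  have hC : IsCompact (closure Ω) := hΩb.isCompact_closure
  -- compact supports
  have hsupp : ∀ f : EuclideanSpace ℝ (Fin d) → ℝ, (∀ x ∉ Ω, f x = 0) →
      HasCompactSupport f := by
    intro f hf
    refine IsCompact.of_isClosed_subset hC isClosed_closure (closure_mono ?_)
    intro x hx
    by_contra hxΩ
    exact hx (hf x hxΩ)
  have hsuppv := hsupp v hvz
  have hsuppw := hsupp w hwz
  have hsuppu := hsupp u huz
  -- integrability
  have hvint : Integrable v := hKv.continuous.integrable_of_hasCompactSupport hsuppv
  have hwint : Integrable w := hKw.continuous.integrable_of_hasCompactSupport hsuppw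
  have huint : Integrable u := hucont.integrable_of_hasCompactSupport hsuppu
  have hv2int : Integrable (fun x => v x ^ 2) :=
    (hKv.continuous.pow 2).integrable_of_hasCompactSupport
      (hsupp _ (fun x hx => by simp [hvz x hx]))
  have hw2int : Integrable (fun x => w x ^ 2) :=
    (hKw.continuous.pow 2).integrable_of_hasCompactSupport
      (hsupp _ (fun x hx => by simp [hwz x hx]))
  have hmul_int : ∀ f : EuclideanSpace ℝ (Fin d) → ℝ, Continuous f → Integrable f →
      Integrable (fun x => g x * f x) := by
    intro f hfc hfi
    refine Integrable.mono' hfi.abs ((hgm.mul hfc.measurable).aestronglyMeasurable) ?_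
    filter_upwards [hg] with x hx
    rw [Real.norm_eq_abs, abs_mul]
    calc |g x| * |f x| ≤ 1 * |f x| := by
          apply mul_le_mul_of_nonneg_right _ (abs_nonneg _)
          rw [abs_of_pos hx.1]; exact hx.2
      _ = |f x| := one_mul _
  have hgvint := hmul_int v hKv.continuous hvint
  have hgwint := hmul_int w hKw.continuous hwint
  have hugint : Integrable (fun x => u x * g x) := by
    have := hmul_int u hucont huint
    simpa [mul_comm] using this
  -- positivity of g a.e.
  -- non-degeneracy: if u has a.e. constant sign, then u =ᵐ 0
  have hsign : ∀ s : ℝ, (∀ᵐ x, s * u x ≤ 0) → (u =ᵐ[volume] fun _ => (0:ℝ)) ∨ s = 0 := by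
    intro s hs
    by_cases hs0 : s = 0
    · exact Or.inr hs0
    left
    have hnonneg : 0 ≤ᵐ[volume] fun x => -(s * (u x * g x)) := by
      filter_upwards [hs, hg] with x hx hgx
      have : s * u x * g x ≤ 0 := mul_nonpos_of_nonpos_of_nonneg hx hgx.1.le
      show (0:ℝ) ≤ -(s * (u x * g x))
      nlinarith
    have hint : Integrable (fun x => -(s * (u x * g x))) := (hugint.const_mul s).neg
    have hzero : (∫ x, -(s * (u x * g x))) = 0 := by
      rw [integral_neg, integral_const_mul, huorth]
      simp
    have := (integral_eq_zero_iff_of_nonneg_ae hnonneg hint).mp hzero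
    filter_upwards [this, hg] with x hx hgx
    have hx' : -(s * (u x * g x)) = (0:ℝ) := hx
    have hx : s * (u x * g x) = 0 := by linarith
    have : u x * g x = 0 := by
      rcases mul_eq_zero.mp hx with h | h
      · exact absurd h hs0
      · exact h
    rcases mul_eq_zero.mp this with h | h
    · exact h
    · exact absurd h (ne_of_gt hgx.1)
  -- v, w not a.e. zero
  have hvne : ¬ (v =ᵐ[volume] fun _ => (0 : ℝ)) := by
    intro hv0
    have : ∀ᵐ x, (1:ℝ) * u x ≤ 0 := by
      filter_upwards [hv0] with x hx
      have hx' : max (u x) 0 = 0 := hx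
      have := le_max_left (u x) 0
      rw [hx'] at this
      linarith
    rcases hsign 1 this with h | h
    · exact hune h
    · norm_num at h
  have hwne : ¬ (w =ᵐ[volume] fun _ => (0 : ℝ)) := by
    intro hw0
    have : ∀ᵐ x, (-1:ℝ) * u x ≤ 0 := by
      filter_upwards [hw0] with x hx
      have hx' : max (-u x) 0 = 0 := hx
      have := le_max_left (-u x) 0
      rw [hx'] at this
      linarith
    rcases hsign (-1) this with h | h
    · exact hune h
    · norm_num at h
  -- positivity of the relevant integrals
  have hsqpos : ∀ f : EuclideanSpace ℝ (Fin d) → ℝ, Integrable (fun x => f x ^ 2) →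
      ¬ (f =ᵐ[volume] fun _ => (0:ℝ)) → 0 < ∫ x, f x ^ 2 := by
    intro f hfi hfne
    rcases (integral_nonneg (f := fun x => f x ^ 2) (fun x => sq_nonneg (f x))).lt_or_eq with h | h
    · exact h
    exfalso
    apply hfne
    have := (integral_eq_zero_iff_of_nonneg (fun x => sq_nonneg (f x)) hfi).mp h.symm
    filter_upwards [this] with x hx
    have hx' : f x ^ 2 = 0 := hx
    exact pow_eq_zero_iff (two_ne_zero) |>.mp hx'
  have hIv2 : 0 < ∫ x, v x ^ 2 := hsqpos v hv2int hvne
  have hIw2 : 0 < ∫ x, w x ^ 2 := hsqpos w hw2int hwne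
  have hgfpos : ∀ f : EuclideanSpace ℝ (Fin d) → ℝ, Integrable (fun x => g x * f x) →
      (∀ x, 0 ≤ f x) → ¬ (f =ᵐ[volume] fun _ => (0:ℝ)) → 0 < ∫ x, g x * f x := by
    intro f hfi hfnn hfne
    have hnn : 0 ≤ᵐ[volume] fun x => g x * f x := by
      filter_upwards [hg] with x hx
      exact mul_nonneg hx.1.le (hfnn x)
    rcases (integral_nonneg_of_ae hnn).lt_or_eq with h | h
    · exact h
    exfalso
    apply hfne
    have := (integral_eq_zero_iff_of_nonneg_ae hnn hfi).mp h.symm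
    filter_upwards [this, hg] with x hx hgx
    have hx' : g x * f x = 0 := hx
    rcases mul_eq_zero.mp hx' with h' | h'
    · exact absurd h' (ne_of_gt hgx.1)
    · exact h'
  have hIgv : 0 < ∫ x, g x * v x :=
    hgfpos v hgvint (fun x => le_max_right _ _) hvne
  have hIgw : 0 < ∫ x, g x * w x :=
    hgfpos w hgwint (fun x => le_max_right _ _) hwne
  -- pointwise identities
  have e1 : ∀ x, (inner ℝ (gradient u x) (gradient v x) : ℝ) = ‖gradient v x‖ ^ 2 := by
    rw [hvdef]
    exact grad_pos_part_inner u hucont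
  have e2 : ∀ x, (inner ℝ (gradient u x) (gradient w x) : ℝ) = -‖gradient w x‖ ^ 2 := by
    rw [hwdef]
    intro x
    have h1 := grad_pos_part_inner (fun y => -u y) hucont.neg x
    rw [grad_neg u x, inner_neg_left] at h1
    linarith
  have e3 : ∀ x, u x * v x = v x ^ 2 := by
    rw [hvdef]
    intro x
    rcases le_or_gt (u x) 0 with h | h
    · simp [max_eq_right h]
    · simp only [max_eq_left h.le]; ring
  have e4 : ∀ x, u x * w x = -(w x ^ 2) := by
    rw [hwdef]
    intro x
    rcases le_or_gt (-u x) 0 with h | h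
    · simp [max_eq_right h]
    · simp only [max_eq_left h.le]; ring
  -- weak formulation applied to v and w
  have h1 := hweak v ⟨K, hKv⟩ hvz
  simp only [e1, e3] at h1
  have h2 := hweak w ⟨K, hKw⟩ hwz
  simp only [e2, e4] at h2
  rw [integral_neg, integral_neg] at h2
  have h2' : (∫ x, ‖gradient w x‖ ^ 2) = lam * (∫ x, w x ^ 2) - ξ * ∫ x, g x * w x := by
    linarith
  -- Rayleigh quotient formulas
  have hv2ne : (∫ x, v x ^ 2) ≠ 0 := ne_of_gt hIv2
  have hw2ne : (∫ x, w x ^ 2) ≠ 0 := ne_of_gt hIw2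
  have Rv : rayleigh d v = lam + ξ * ((∫ x, g x * v x) / (∫ x, v x ^ 2)) := by
    unfold rayleigh
    rw [h1]
    field_simp
  have Rw : rayleigh d w = lam - ξ * ((∫ x, g x * w x) / (∫ x, w x ^ 2)) := by
    unfold rayleigh
    rw [h2']
    field_simp
  have hA : 0 < (∫ x, g x * v x) / (∫ x, v x ^ 2) := div_pos hIgv hIv2
  have hB : 0 < (∫ x, g x * w x) / (∫ x, w x ^ 2) := div_pos hIgw hIw2
  set A := (∫ x, g x * v x) / (∫ x, v x ^ 2)
  set B := (∫ x, g x * w x) / (∫ x, w x ^ 2)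
  refine ⟨hvne, hwne, ?_, ?_⟩
  · rw [Rv, Rw]
    constructor
    · intro h
      nlinarith
    · intro h
      nlinarith
  · rw [Rv, Rw]
    constructor
    · intro h
      nlinarith
    · intro h
      rw [h]
      ring
end
end

section
/- Let d ≥ 2, let 0 < α ≤ 1, let Ω ⊆ ℝ^d be open and bounded, let g ∈ L^∞_α, and let u be a minimizer for λ₁^g(Ω), with Ω⁺ := {x : u(x) > 0}, Ω⁻ := {x : u(x) < 0}, u⁺ := max(u,0), u⁻ := max(−u,0) (both Ω⁺ and Ω⁻ have positive Lebesgue measure). Then: (i) there exist α₁, α₂ ∈ [α,1] such that λ₁^χ(Ω) ≤ λ₁^g(Ω), where χ : ℝ^d → ℝ equals α₁ on Ω⁺ and α₂ on ℝ^d \ Ω⁺; and (ii) if moreover R(u⁺) ≤ R(u⁻), then λ₁^{χ_α}(Ω) ≤ λ₁^g(Ω), where χ_α : ℝ^d → ℝ equals α on Ω⁺ and 1 on ℝ^d \ Ω⁺. -/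
set_option maxHeartbeats 4000000


open MeasureTheory Metric Set Filter

open scoped Classical ENNReal

noncomputable section

/-! ### Auxiliary lemmas -/

lemma norm_grad_eq (d : ℕ) (f : EuclideanSpace ℝ (Fin d) → ℝ) (x : EuclideanSpace ℝ (Fin d)) :
    ‖gradient f x‖ = ‖fderiv ℝ f x‖ := by
  simp only [gradient]
  exact LinearIsometryEquiv.norm_map _ _

lemma rayleigh_nonneg_s9 (d : ℕ) (f : EuclideanSpace ℝ (Fin d) → ℝ) : 0 ≤ rayleigh d f :=
  div_nonneg (integral_nonneg fun x => by positivity) (integral_nonneg fun x => by positivity)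

lemma twistedEV_le (d : ℕ) (Ω : Set (EuclideanSpace ℝ (Fin d)))
    (g v : EuclideanSpace ℝ (Fin d) → ℝ) (hv : IsDirTrial d Ω v)
    (hc : (∫ x, v x * g x) = 0) : twistedEV d Ω g ≤ rayleigh d v := by
  refine csInf_le ⟨0, ?_⟩ ⟨v, hv, hc, rfl⟩
  rintro r ⟨w, -, -, rfl⟩
  exact rayleigh_nonneg_s9 d w

/-- A Lipschitz function vanishing outside a bounded set has compact support. -/
lemma hcs_aux (d : ℕ) (Ω : Set (EuclideanSpace ℝ (Fin d))) (hΩb : Bornology.IsBounded Ω)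
    (f : EuclideanSpace ℝ (Fin d) → ℝ) (h0 : ∀ x ∉ Ω, f x = 0) : HasCompactSupport f := by
  have hsub : Function.support f ⊆ Ω := by
    intro x hx
    by_contra hxΩ
    exact hx (h0 x hxΩ)
  have hcl : IsCompact (closure Ω) :=
    Metric.isCompact_of_isClosed_isBounded isClosed_closure hΩb.closure
  exact hcl.of_isClosed_subset (isClosed_tsupport f) (closure_mono hsub)

/-- Integrability of the squared norm of the gradient of a Lipschitz function with
compact "support region". -/
lemma grad_sq_integrable (d : ℕ) (Ω : Set (EuclideanSpace ℝ (Fin d)))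
    (hΩb : Bornology.IsBounded Ω) (f : EuclideanSpace ℝ (Fin d) → ℝ) (K : NNReal)
    (hK : LipschitzWith K f) (h0 : ∀ x ∉ Ω, f x = 0) :
    Integrable (fun x => ‖gradient f x‖ ^ 2) := by
  have hcl : IsCompact (closure Ω) :=
    Metric.isCompact_of_isClosed_isBounded isClosed_closure hΩb.closure
  have hmeas : AEStronglyMeasurable (fun x => ‖gradient f x‖ ^ 2) volume := by
    have h1 : Measurable fun x => ‖fderiv ℝ f x‖ ^ 2 :=
      ((measurable_fderiv ℝ f).norm).pow_const 2
    have h2 : (fun x => ‖gradient f x‖ ^ 2) = fun x => ‖fderiv ℝ f x‖ ^ 2 := by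
      funext x; rw [norm_grad_eq]
    rw [h2]
    exact h1.aestronglyMeasurable
  have hbd : Integrable ((closure Ω).indicator fun _ => (K : ℝ) ^ 2) := by
    rw [integrable_indicator_iff hcl.measurableSet]
    exact integrableOn_const hcl.measure_lt_top.ne
  refine hbd.mono' hmeas (Eventually.of_forall fun x => ?_)
  by_cases hx : x ∈ closure Ω
  · rw [Set.indicator_of_mem hx]
    rw [Real.norm_eq_abs, abs_of_nonneg (by positivity), norm_grad_eq]
    have := norm_fderiv_le_of_lipschitz ℝ hK (x₀ := x)
    nlinarith [norm_nonneg (fderiv ℝ f x)]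
  · rw [Set.indicator_of_notMem hx]
    have hz : fderiv ℝ f x = 0 := by
      have hev : f =ᶠ[nhds x] fun _ => (0 : ℝ) := by
        have : (closure Ω)ᶜ ∈ nhds x := isClosed_closure.isOpen_compl.mem_nhds hx
        filter_upwards [this] with y hy
        exact h0 y fun hyΩ => hy (subset_closure hyΩ)
      rw [hev.fderiv_eq, fderiv_const_apply]
    rw [norm_grad_eq, hz]
    simp

/-- The key a.e. splitting of gradients along the nodal decomposition. -/
lemma ae_grad_split (d : ℕ) (u : EuclideanSpace ℝ (Fin d) → ℝ) (K : NNReal)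
    (hK : LipschitzWith K u) (t : ℝ) (ht : 0 ≤ t) :
    ∀ᵐ x, ‖gradient (fun y => max (u y) 0 - t * max (-u y) 0) x‖ ^ 2
      = ‖gradient (fun y => max (u y) 0) x‖ ^ 2
        + t ^ 2 * ‖gradient (fun y => max (-u y) 0) x‖ ^ 2 := by
  have hKp : LipschitzWith (K ⊔ 0) fun y => max (u y) 0 := hK.max (LipschitzWith.const 0)
  have hKm : LipschitzWith (K ⊔ 0) fun y => max (-u y) 0 := by
    have : LipschitzWith K fun y => -u y := LipschitzWith.comp LipschitzWith.id.neg hK |>.weaken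
      (by simp)
    exact this.max (LipschitzWith.const 0)
  filter_upwards [hK.ae_differentiableAt (μ := volume), hKp.ae_differentiableAt (μ := volume),
    hKm.ae_differentiableAt (μ := volume)] with x hdu hdp hdm
  rcases lt_trichotomy (u x) 0 with hx | hx | hx
  · -- u x < 0
    have hS : ∀ᶠ y in nhds x, u y < 0 :=
      (isOpen_lt hK.continuous continuous_const).eventually_mem hx
    have hp : (fun y => max (u y) 0) =ᶠ[nhds x] fun _ => (0 : ℝ) :=
      hS.mono fun y hy => max_eq_right hy.le
    have hm : (fun y => max (-u y) 0) =ᶠ[nhds x] fun y => -u y :=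
      hS.mono fun y hy => max_eq_left (by linarith)
    have hv : (fun y => max (u y) 0 - t * max (-u y) 0) =ᶠ[nhds x] fun y => t * u y := by
      filter_upwards [hS] with y hy
      rw [max_eq_right hy.le, max_eq_left (by linarith : (0:ℝ) ≤ -u y)]
      ring
    have fp : fderiv ℝ (fun y => max (u y) 0) x = 0 := by
      rw [hp.fderiv_eq, fderiv_const_apply]
    have fm : fderiv ℝ (fun y => max (-u y) 0) x = -fderiv ℝ u x := by
      rw [hm.fderiv_eq, fderiv_fun_neg]
    have fv : fderiv ℝ (fun y => max (u y) 0 - t * max (-u y) 0) x = t • fderiv ℝ u x := by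
      rw [hv.fderiv_eq, fderiv_const_mul hdu]
    rw [norm_grad_eq, norm_grad_eq, norm_grad_eq, fp, fm, fv, norm_smul, norm_neg, norm_zero]
    rw [Real.norm_eq_abs, abs_of_nonneg ht]
    ring
  · -- u x = 0
    have minp : IsLocalMin (fun y => max (u y) 0) x := by
      refine Eventually.of_forall fun y => ?_
      simp [hx, le_max_right]
    have minm : IsLocalMin (fun y => max (-u y) 0) x := by
      refine Eventually.of_forall fun y => ?_
      simp [hx, le_max_right]
    have fp : fderiv ℝ (fun y => max (u y) 0) x = 0 := minp.fderiv_eq_zero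
    have fm : fderiv ℝ (fun y => max (-u y) 0) x = 0 := minm.fderiv_eq_zero
    have fv : fderiv ℝ (fun y => max (u y) 0 - t * max (-u y) 0) x = 0 := by
      rw [fderiv_fun_sub hdp (hdm.const_mul t), fderiv_const_mul hdm, fp, fm]
      simp
    rw [norm_grad_eq, norm_grad_eq, norm_grad_eq, fp, fm, fv]
    simp
  · -- 0 < u x
    have hS : ∀ᶠ y in nhds x, 0 < u y :=
      (isOpen_lt continuous_const hK.continuous).eventually_mem hx
    have hp : (fun y => max (u y) 0) =ᶠ[nhds x] u :=
      hS.mono fun y hy => max_eq_left hy.le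
    have hm : (fun y => max (-u y) 0) =ᶠ[nhds x] fun _ => (0 : ℝ) :=
      hS.mono fun y hy => max_eq_right (by linarith)
    have hv : (fun y => max (u y) 0 - t * max (-u y) 0) =ᶠ[nhds x] u := by
      filter_upwards [hS] with y hy
      rw [max_eq_left hy.le, max_eq_right (by linarith : -u y ≤ (0:ℝ))]
      ring
    have fp : fderiv ℝ (fun y => max (u y) 0) x = fderiv ℝ u x := hp.fderiv_eq
    have fm : fderiv ℝ (fun y => max (-u y) 0) x = 0 := by
      rw [hm.fderiv_eq, fderiv_const_apply]
    have fv : fderiv ℝ (fun y => max (u y) 0 - t * max (-u y) 0) x = fderiv ℝ u x := hv.fderiv_eq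
    rw [norm_grad_eq, norm_grad_eq, norm_grad_eq, fp, fm, fv, norm_zero]
    ring

/-- comparison of `λ₁^g(Ω)` with twisted eigenvalues for bang-bang constraints
built on the nodal sets of a minimizer. -/
theorem stmt9 (d : ℕ) (hd : 2 ≤ d) (α : ℝ) (hα0 : 0 < α) (hα1 : α ≤ 1)
    (Ω : Set (EuclideanSpace ℝ (Fin d))) (hΩo : IsOpen Ω) (hΩb : Bornology.IsBounded Ω)
    (g : EuclideanSpace ℝ (Fin d) → ℝ) (hgm : Measurable g)
    (hg : ∀ᵐ x, α ≤ g x ∧ g x ≤ 1)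
    (u : EuclideanSpace ℝ (Fin d) → ℝ) (hu : IsTwistedMin d Ω g u) :
    (∃ α₁ α₂ : ℝ, α ≤ α₁ ∧ α₁ ≤ 1 ∧ α ≤ α₂ ∧ α₂ ≤ 1 ∧
      twistedEV d Ω (fun x => if 0 < u x then α₁ else α₂) ≤ twistedEV d Ω g) ∧
    (rayleigh d (fun x => max (u x) 0) ≤ rayleigh d (fun x => max (-u x) 0) →
      twistedEV d Ω (fun x => if 0 < u x then α else 1) ≤ twistedEV d Ω g) := by
  obtain ⟨⟨⟨K, hK⟩, hu0, hune⟩, hcon, hmin⟩ := hu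
  set up : EuclideanSpace ℝ (Fin d) → ℝ := fun x => max (u x) 0 with hup_def
  set um : EuclideanSpace ℝ (Fin d) → ℝ := fun x => max (-u x) 0 with hum_def
  have hupc : Continuous up := (hK.continuous.max continuous_const)
  have humc : Continuous um := (hK.continuous.neg.max continuous_const)
  have hup0 : ∀ x ∉ Ω, up x = 0 := fun x hx => by simp [up, hu0 x hx]
  have hum0 : ∀ x ∉ Ω, um x = 0 := fun x hx => by simp [um, hu0 x hx]
  have hupcs : HasCompactSupport up := hcs_aux d Ω hΩb up hup0
  have humcs : HasCompactSupport um := hcs_aux d Ω hΩb um hum0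
  have iup : Integrable up := hupc.integrable_of_hasCompactSupport hupcs
  have ium : Integrable um := humc.integrable_of_hasCompactSupport humcs
  have iup2 : Integrable (fun x => (up x) ^ 2) :=
    (hupc.pow 2).integrable_of_hasCompactSupport (hupcs.comp_left (g := fun s : ℝ => s ^ (2:ℕ))
      (by norm_num) : HasCompactSupport (up ^ 2))
  have ium2 : Integrable (fun x => (um x) ^ 2) :=
    (humc.pow 2).integrable_of_hasCompactSupport (humcs.comp_left (g := fun s : ℝ => s ^ (2:ℕ))
      (by norm_num) : HasCompactSupport (um ^ 2))
  have hg_abs : ∀ᵐ x, |g x| ≤ 1 := by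
    filter_upwards [hg] with x hx
    exact abs_le.2 ⟨by linarith, hx.2⟩
  have iupg : Integrable (fun x => up x * g x) := by
    refine iup.abs.mono' ((hupc.measurable.mul hgm).aestronglyMeasurable) ?_
    filter_upwards [hg_abs] with x hx
    rw [Real.norm_eq_abs, abs_mul]
    exact mul_le_of_le_one_right (abs_nonneg _) hx
  have iumg : Integrable (fun x => um x * g x) := by
    refine ium.abs.mono' ((humc.measurable.mul hgm).aestronglyMeasurable) ?_
    filter_upwards [hg_abs] with x hx
    rw [Real.norm_eq_abs, abs_mul]
    exact mul_le_of_le_one_right (abs_nonneg _) hx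
  have hupnn : ∀ x, 0 ≤ up x := fun x => le_max_right _ _
  have humnn : ∀ x, 0 ≤ um x := fun x => le_max_right _ _
  have husub : ∀ x, u x = up x - um x := by
    intro x
    rcases le_total (u x) 0 with h | h
    · simp [up, um, max_eq_right h, max_eq_left (by linarith : (0:ℝ) ≤ -u x)]
    · simp [up, um, max_eq_left h, max_eq_right (by linarith : -u x ≤ (0:ℝ))]
  -- the common value A = ∫ u⁺ g = ∫ u⁻ g
  set A : ℝ := ∫ x, up x * g x with hA_def
  have hAm : A = ∫ x, um x * g x := by
    have hsplit : (fun x => u x * g x) = fun x => up x * g x - um x * g x := by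
      funext x; rw [husub x]; ring
    have := hcon
    rw [hsplit, integral_sub iupg iumg] at this
    linarith
  set P : ℝ := ∫ x, up x with hP_def
  set N : ℝ := ∫ x, um x with hN_def
  have hPnn : 0 ≤ P := integral_nonneg hupnn
  have hNnn : 0 ≤ N := integral_nonneg humnn
  have hαP : α * P ≤ A := by
    rw [hP_def, ← integral_const_mul]
    refine integral_mono_ae (iup.const_mul α) iupg ?_
    filter_upwards [hg] with x hx
    calc α * up x = up x * α := by ring
    _ ≤ up x * g x := mul_le_mul_of_nonneg_left hx.1 (hupnn x)
  have hAP : A ≤ P := by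
    rw [hP_def]
    refine integral_mono_ae iupg iup ?_
    filter_upwards [hg] with x hx
    calc up x * g x ≤ up x * 1 := mul_le_mul_of_nonneg_left hx.2 (hupnn x)
    _ = up x := by ring
  have hαN : α * N ≤ A := by
    rw [hAm, hN_def, ← integral_const_mul]
    refine integral_mono_ae (ium.const_mul α) iumg ?_
    filter_upwards [hg] with x hx
    calc α * um x = um x * α := by ring
    _ ≤ um x * g x := mul_le_mul_of_nonneg_left hx.1 (humnn x)
  have hAN : A ≤ N := by
    rw [hAm, hN_def]
    refine integral_mono_ae iumg ium ?_
    filter_upwards [hg] with x hx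
    calc um x * g x ≤ um x * 1 := mul_le_mul_of_nonneg_left hx.2 (humnn x)
    _ = um x := by ring
  -- positivity of P and N
  have hPN_zero : P = 0 → N = 0 := by
    intro h
    have hA0 : A = 0 := le_antisymm (h ▸ hAP) (by nlinarith)
    nlinarith
  have hNP_zero : N = 0 → P = 0 := by
    intro h
    have hA0 : A = 0 := le_antisymm (h ▸ hAN) (by nlinarith)
    nlinarith
  have hPne : P ≠ 0 := by
    intro h
    have hN0 : N = 0 := hPN_zero h
    have hup_ae : up =ᵐ[volume] 0 := (integral_eq_zero_iff_of_nonneg hupnn iup).1 h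
    have hum_ae : um =ᵐ[volume] 0 := (integral_eq_zero_iff_of_nonneg humnn ium).1 hN0
    refine hune ?_
    filter_upwards [hup_ae, hum_ae] with x h1 h2
    have := husub x
    simp only [Pi.zero_apply] at h1 h2
    simp [this, h1, h2]
  have hNne : N ≠ 0 := fun h => hPne (hNP_zero h)
  have hPpos : 0 < P := lt_of_le_of_ne hPnn (Ne.symm hPne)
  have hNpos : 0 < N := lt_of_le_of_ne hNnn (Ne.symm hNne)
  -- positive measure of the positivity/negativity sets
  have hsupp_up : Function.support up = {x | 0 < u x} := by
    ext x
    simp only [Function.mem_support, Set.mem_setOf_eq]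
    constructor
    · intro h
      rcases lt_or_eq_of_le (hupnn x) with h' | h'
      · by_contra hc
        push_neg at hc
        rw [show up x = 0 from max_eq_right hc] at h'
        exact lt_irrefl 0 h'
      · exact absurd h'.symm h
    · intro h
      rw [show up x = u x from max_eq_left h.le]
      exact ne_of_gt h
  have hsupp_um : Function.support um = {x | u x < 0} := by
    ext x
    simp only [Function.mem_support, Set.mem_setOf_eq]
    constructor
    · intro h
      by_contra hc
      push_neg at hc
      exact h (max_eq_right (by linarith))
    · intro h
      rw [show um x = -u x from max_eq_left (by linarith)]
      simp only [ne_eq, neg_eq_zero]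
      exact ne_of_lt h
  have hSpos : 0 < volume {x | 0 < u x} := by
    rw [← hsupp_up]
    exact (integral_pos_iff_support_of_nonneg_ae (Eventually.of_forall hupnn) iup).1 hPpos
  have hSneg : 0 < volume {x | u x < 0} := by
    rw [← hsupp_um]
    exact (integral_pos_iff_support_of_nonneg_ae (Eventually.of_forall humnn) ium).1 hNpos
  have hu_trial : IsDirTrial d Ω u := ⟨⟨K, hK⟩, hu0, hune⟩
  constructor
  · -- Part (i)
    refine ⟨A / P, A / N, ?_, ?_, ?_, ?_, ?_⟩
    · exact (le_div_iff₀ hPpos).2 hαP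
    · exact (div_le_one hPpos).2 hAP
    · exact (le_div_iff₀ hNpos).2 hαN
    · exact (div_le_one hNpos).2 hAN
    · have hconχ : (∫ x, u x * (if 0 < u x then A / P else A / N)) = 0 := by
        have hpt : (fun x => u x * (if 0 < u x then A / P else A / N))
            = fun x => (A / P) * up x - (A / N) * um x := by
          funext x
          by_cases h : 0 < u x
          · rw [if_pos h, show up x = u x from max_eq_left h.le,
              show um x = 0 from max_eq_right (by linarith)]
            ring
          · push_neg at h
            rw [if_neg (not_lt.2 h), show up x = 0 from max_eq_right h,
              show um x = -u x from max_eq_left (by linarith)]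
            ring
        rw [hpt, integral_sub (iup.const_mul _) (ium.const_mul _), integral_const_mul,
          integral_const_mul, ← hP_def, ← hN_def, div_mul_cancel₀ A hPne,
          div_mul_cancel₀ A hNne, sub_self]
      have := twistedEV_le d Ω (fun x => if 0 < u x then A / P else A / N) u hu_trial hconχ
      rw [hmin] at this
      exact this
  · -- Part (ii)
    intro hray
    set t : ℝ := α * P / N with ht_def
    have ht0 : 0 ≤ t := div_nonneg (by positivity) hNnn
    have ht1 : t ≤ 1 := (div_le_one hNpos).2 (le_trans hαP hAN)
    set v : EuclideanSpace ℝ (Fin d) → ℝ := fun x => up x - t * um x with hv_def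
    -- v is a Dirichlet trial function
    have hvL : ∃ K', LipschitzWith K' v := by
      have hKp : LipschitzWith (K ⊔ 0) up := hK.max (LipschitzWith.const 0)
      have hKm : LipschitzWith (K ⊔ 0) um := by
        have : LipschitzWith K fun y => -u y :=
          (LipschitzWith.comp LipschitzWith.id.neg hK).weaken (by simp)
        exact this.max (LipschitzWith.const 0)
      refine ⟨(K ⊔ 0) + ‖t‖₊ * (K ⊔ 0), ?_⟩
      have h2 : LipschitzWith (‖t‖₊ * (K ⊔ 0)) fun x => t * um x := by
        have := (lipschitzWith_smul (β := ℝ) t).comp hKm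
        simpa [smul_eq_mul, Function.comp_def] using this
      exact hKp.sub h2
    have hv0 : ∀ x ∉ Ω, v x = 0 := by
      intro x hx
      simp [v, hup0 x hx, hum0 x hx]
    have hvne : ¬ (v =ᵐ[volume] fun _ => (0 : ℝ)) := by
      intro hae
      have hz : volume {x | ¬ (v x = 0)} = 0 := by
        simpa [Filter.EventuallyEq, ae_iff] using hae
      have hsub : {x | 0 < u x} ⊆ {x | ¬ (v x = 0)} := by
        intro x hx
        have h1 : up x = u x := max_eq_left (le_of_lt hx)
        have h2 : um x = 0 := max_eq_right (by simpa using le_of_lt hx)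
        simp only [Set.mem_setOf_eq, v, h1, h2, mul_zero, sub_zero]
        exact ne_of_gt hx
      have hle : volume {x | 0 < u x} ≤ volume {x | ¬ (v x = 0)} := measure_mono hsub
      rw [hz] at hle
      exact absurd (le_antisymm hle zero_le) (ne_of_gt hSpos)
    have hv_trial : IsDirTrial d Ω v := ⟨hvL, hv0, hvne⟩
    -- constraint for v
    have hconv : (∫ x, v x * (if 0 < u x then α else 1)) = 0 := by
      have hpt : (fun x => v x * (if 0 < u x then α else 1))
          = fun x => α * up x - t * um x := by
        funext x
        by_cases h : 0 < u x
        · have h1 : up x = u x := max_eq_left h.le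
          have h2 : um x = 0 := max_eq_right (by linarith)
          simp only [v, if_pos h, h1, h2]
          ring
        · push_neg at h
          have h1 : up x = 0 := max_eq_right h
          have h2 : um x = -u x := max_eq_left (by linarith)
          simp only [v, if_neg (not_lt.2 h), h1, h2]
          ring
      rw [hpt, integral_sub (iup.const_mul _) (ium.const_mul _), integral_const_mul,
        integral_const_mul, ← hP_def, ← hN_def, ht_def, div_mul_cancel₀ _ hNne, sub_self]
    -- Rayleigh quotient computations
    set a : ℝ := ∫ x, ‖gradient up x‖ ^ 2 with ha_def
    set b : ℝ := ∫ x, ‖gradient um x‖ ^ 2 with hb_def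
    set c : ℝ := ∫ x, (up x) ^ 2 with hc_def
    set e : ℝ := ∫ x, (um x) ^ 2 with he_def
    have iga : Integrable (fun x => ‖gradient up x‖ ^ 2) :=
      grad_sq_integrable d Ω hΩb up (K ⊔ 0) (hK.max (LipschitzWith.const 0)) hup0
    have igb : Integrable (fun x => ‖gradient um x‖ ^ 2) := by
      refine grad_sq_integrable d Ω hΩb um (K ⊔ 0) ?_ hum0
      exact ((LipschitzWith.comp LipschitzWith.id.neg hK).weaken (by simp)).max
        (LipschitzWith.const 0)
    have hnum_v : (∫ x, ‖gradient v x‖ ^ 2) = a + t ^ 2 * b := by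
      rw [integral_congr_ae (ae_grad_split d u K hK t ht0),
        integral_add iga (igb.const_mul _), integral_const_mul]
    have hnum_u : (∫ x, ‖gradient u x‖ ^ 2) = a + b := by
      have hfe : (fun y => max (u y) 0 - 1 * max (-u y) 0) = u := by
        funext y
        rw [one_mul, ← husub y]
      have h := ae_grad_split d u K hK 1 zero_le_one
      rw [hfe] at h
      rw [integral_congr_ae h, integral_add iga (igb.const_mul _), integral_const_mul]
      ring
    have hden_v : (∫ x, (v x) ^ 2) = c + t ^ 2 * e := by
      have hpt : (fun x => (v x) ^ 2) = fun x => (up x) ^ 2 + t ^ 2 * (um x) ^ 2 := by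
        funext x
        rcases le_or_gt (u x) 0 with h | h
        · have h1 : up x = 0 := max_eq_right h
          simp only [v, h1]
          ring
        · have h2 : um x = 0 := max_eq_right (by linarith)
          simp only [v, h2]
          ring
      rw [hpt, integral_add iup2 (ium2.const_mul _), integral_const_mul]
    have hden_u : (∫ x, (u x) ^ 2) = c + e := by
      have hpt : (fun x => (u x) ^ 2) = fun x => (up x) ^ 2 + (um x) ^ 2 := by
        funext x
        rcases le_or_gt (u x) 0 with h | h
        · have h1 : up x = 0 := max_eq_right h
          have h2 : um x = -u x := max_eq_left (by linarith)
          rw [h1, h2]; ring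
        · have h1 : up x = u x := max_eq_left h.le
          have h2 : um x = 0 := max_eq_right (by linarith)
          rw [h1, h2]; ring
      rw [hpt, integral_add iup2 ium2]
    have hcpos : 0 < c := by
      have hsupp : Function.support (fun x => (up x) ^ 2) = {x | 0 < u x} := by
        rw [← hsupp_up]
        ext x
        simp [Function.mem_support, pow_eq_zero_iff]
      refine (integral_pos_iff_support_of_nonneg_ae
        (Eventually.of_forall fun x => by positivity) iup2).2 ?_
      rw [hsupp]
      exact hSpos
    have hepos : 0 < e := by
      have hsupp : Function.support (fun x => (um x) ^ 2) = {x | u x < 0} := by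
        rw [← hsupp_um]
        ext x
        simp [Function.mem_support, pow_eq_zero_iff]
      refine (integral_pos_iff_support_of_nonneg_ae
        (Eventually.of_forall fun x => by positivity) ium2).2 ?_
      rw [hsupp]
      exact hSneg
    have hanneg : 0 ≤ a := integral_nonneg fun x => by positivity
    have hbnneg : 0 ≤ b := integral_nonneg fun x => by positivity
    have hkey : a * e ≤ b * c := by
      have : a / c ≤ b / e := by
        have h1 : rayleigh d up = a / c := by rw [rayleigh, ← ha_def, ← hc_def]
        have h2 : rayleigh d um = b / e := by rw [rayleigh, ← hb_def, ← he_def]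
        rw [← h1, ← h2]
        exact hray
      exact (div_le_div_iff₀ hcpos hepos).1 this
    have hfrac : (a + t ^ 2 * b) / (c + t ^ 2 * e) ≤ (a + b) / (c + e) := by
      have ht2 : t ^ 2 ≤ 1 := by nlinarith
      have hd1 : (0:ℝ) < c + t ^ 2 * e := add_pos_of_pos_of_nonneg hcpos (by positivity)
      have hd2 : (0:ℝ) < c + e := by linarith
      rw [div_le_div_iff₀ hd1 hd2]
      nlinarith [mul_nonneg (sub_nonneg.2 ht2) (sub_nonneg.2 hkey)]
    have hrv : rayleigh d v = (a + t ^ 2 * b) / (c + t ^ 2 * e) := by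
      rw [rayleigh, hnum_v, hden_v]
    have hru : rayleigh d u = (a + b) / (c + e) := by
      rw [rayleigh, hnum_u, hden_u]
    calc twistedEV d Ω (fun x => if 0 < u x then α else 1)
        ≤ rayleigh d v := twistedEV_le d Ω _ v hv_trial hconv
      _ ≤ rayleigh d u := by rw [hrv, hru]; exact hfrac
      _ = twistedEV d Ω g := hmin
end
end

section
/- Let σ ≥ 1/2 and define Φ_σ(x) := x^{2σ} · J_{σ+1}(x)/J_σ(x) for x ∈ (0, j_{σ,1}). Then Φ_σ is positive on (0, j_{σ,1}), strictly increasing on (0, j_{σ,1}), and for every x ∈ (0, j_{σ,1}) it is differentiable with Φ_σ'(x) = x^{2σ} − x^{−1} Φ_σ(x) + x^{−2σ} Φ_σ(x)². -/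
open Set

noncomputable section

/-- The Bessel function of the first kind of order `σ`, defined by its power series
(for positive arguments, using real powers). -/
def besselJ (σ : ℝ) (x : ℝ) : ℝ :=
  ∑' m : ℕ, ((-1 : ℝ) ^ m / ((m.factorial : ℝ) * Real.Gamma ((m : ℝ) + σ + 1))) *
    (x / 2) ^ (2 * (m : ℝ) + σ)

/-- The first positive zero `j_{σ,1}` of the Bessel function `J_σ`. -/
def besselJZero (σ : ℝ) : ℝ :=
  sInf {x : ℝ | 0 < x ∧ besselJ σ x = 0}

namespace Stmt18Aux

/-- coefficient -/
def a (σ : ℝ) (m : ℕ) : ℝ :=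
  (-1 : ℝ) ^ m / ((m.factorial : ℝ) * Real.Gamma ((m : ℝ) + σ + 1))

/-- entire function such that J_σ(x) = (x/2)^σ f σ ((x/2)^2) -/
def f (σ : ℝ) (t : ℝ) : ℝ := ∑' m : ℕ, a σ m * t ^ m

variable {σ : ℝ}

lemma gamma_pos (hσ : 0 ≤ σ) (m : ℕ) : 0 < Real.Gamma ((m : ℝ) + σ + 1) := by
  apply Real.Gamma_pos_of_pos
  have := m.cast_nonneg (α := ℝ)
  linarith

lemma gamma_ge (hσ : 0 ≤ σ) (m : ℕ) :
    Real.Gamma (σ + 1) ≤ Real.Gamma ((m : ℝ) + σ + 1) := by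
  induction m with
  | zero => simp
  | succ n ih =>
    have h1 : ((n + 1 : ℕ) : ℝ) + σ + 1 = ((n : ℝ) + σ + 1) + 1 := by push_cast; ring
    have hpos : (0 : ℝ) < (n : ℝ) + σ + 1 := by
      have := n.cast_nonneg (α := ℝ); linarith
    rw [h1, Real.Gamma_add_one hpos.ne']
    calc Real.Gamma (σ + 1) ≤ Real.Gamma ((n : ℝ) + σ + 1) := ih
    _ ≤ ((n : ℝ) + σ + 1) * Real.Gamma ((n : ℝ) + σ + 1) := by
        nlinarith [gamma_pos hσ n, n.cast_nonneg (α := ℝ)]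

lemma abs_a_le (hσ : 0 ≤ σ) (m : ℕ) :
    |a σ m| ≤ (Real.Gamma (σ + 1))⁻¹ * (1 / m.factorial) := by
  have hg := gamma_pos hσ m
  have hg1 : (0:ℝ) < Real.Gamma (σ + 1) := Real.Gamma_pos_of_pos (by linarith)
  have hf : (0:ℝ) < (m.factorial : ℝ) := by exact_mod_cast m.factorial_pos
  have habs : |a σ m| = ((m.factorial : ℝ) * Real.Gamma ((m : ℝ) + σ + 1))⁻¹ := by
    rw [a, abs_div, abs_pow, abs_neg, abs_one, one_pow, abs_of_pos (by positivity)]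
    simp [one_div]
  rw [habs]
  have h2 := gamma_ge hσ m
  have : (Real.Gamma (σ + 1))⁻¹ * (1 / m.factorial)
      = ((m.factorial : ℝ) * Real.Gamma (σ + 1))⁻¹ := by
    rw [mul_inv]; ring
  rw [this]
  apply inv_anti₀ (by positivity)
  exact mul_le_mul_of_nonneg_left h2 hf.le

lemma summable_term (hσ : 0 ≤ σ) (t : ℝ) : Summable (fun m : ℕ => a σ m * t ^ m) := by
  apply Summable.of_norm_bounded
    (g := fun m : ℕ => (Real.Gamma (σ + 1))⁻¹ * (|t| ^ m / m.factorial))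
  · exact (Real.summable_pow_div_factorial |t|).mul_left _
  · intro m
    rw [norm_mul, norm_pow, Real.norm_eq_abs, Real.norm_eq_abs]
    calc |a σ m| * |t| ^ m ≤ (Real.Gamma (σ + 1))⁻¹ * (1 / m.factorial) * |t| ^ m := by
          apply mul_le_mul_of_nonneg_right (abs_a_le hσ m) (by positivity)
    _ = (Real.Gamma (σ + 1))⁻¹ * (|t| ^ m / m.factorial) := by ring

end Stmt18Aux

namespace Stmt18Aux

variable {σ : ℝ}

lemma summable_deriv_bound (hσ : 0 ≤ σ) {R : ℝ} (hR : 0 ≤ R) :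
    Summable (fun m : ℕ => |a σ m| * (m * R ^ (m - 1))) := by
  rw [← summable_nat_add_iff 1]
  apply Summable.of_norm_bounded
    (g := fun m : ℕ => (Real.Gamma (σ + 1))⁻¹ * (R ^ m / m.factorial))
  · exact (Real.summable_pow_div_factorial R).mul_left _
  · intro m
    have h1 : (0:ℝ) ≤ |a σ (m+1)| * ((m+1 : ℕ) * R ^ ((m+1) - 1)) := by positivity
    rw [Real.norm_eq_abs, abs_of_nonneg h1]
    have h2 : ((m+1) : ℕ) - 1 = m := rfl
    rw [h2]
    have h3 := abs_a_le hσ (m+1)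
    have hfact : ((m+1).factorial : ℝ) = (m+1) * m.factorial := by
      rw [Nat.factorial_succ]; push_cast; ring
    calc |a σ (m+1)| * ((m+1 : ℕ) * R ^ m)
        ≤ (Real.Gamma (σ + 1))⁻¹ * (1 / (m+1).factorial) * ((m+1 : ℕ) * R ^ m) := by
          apply mul_le_mul_of_nonneg_right h3 (by positivity)
      _ = (Real.Gamma (σ + 1))⁻¹ * (R ^ m / m.factorial) := by
          rw [hfact]
          have h4 : ((m:ℝ)+1) ≠ 0 := by positivity
          have h5 : ((m.factorial : ℝ)) ≠ 0 := by
            exact_mod_cast m.factorial_pos.ne'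
          push_cast
          field_simp

lemma summable_deriv_term (hσ : 0 ≤ σ) (t : ℝ) :
    Summable (fun m : ℕ => a σ m * (m * t ^ (m - 1))) := by
  apply Summable.of_norm_bounded
    (g := fun m : ℕ => |a σ m| * (m * |t| ^ (m - 1)))
    (summable_deriv_bound hσ (abs_nonneg t))
  intro m
  rw [Real.norm_eq_abs, abs_mul, abs_mul, abs_pow, Nat.abs_cast]

lemma hasDerivAt_f_aux (hσ : 0 ≤ σ) (t : ℝ) :
    HasDerivAt (f σ) (∑' m : ℕ, a σ m * (m * t ^ (m - 1))) t := by
  have hmem : t ∈ Metric.ball (0:ℝ) (|t| + 1) := by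
    simp [Real.dist_eq]
  have := hasDerivAt_tsum_of_isPreconnected
    (u := fun m : ℕ => |a σ m| * (m * (|t|+1) ^ (m - 1)))
    (g := fun m (y : ℝ) => a σ m * y ^ m)
    (g' := fun m (y : ℝ) => a σ m * (m * y ^ (m - 1)))
    (summable_deriv_bound hσ (by positivity))
    Metric.isOpen_ball
    (convex_ball (0:ℝ) (|t|+1)).isPreconnected
    (fun n y _ => (hasDerivAt_pow n y).const_mul (a σ n))
    ?_ hmem (summable_term hσ t) hmem
  · exact this
  · intro n y hy
    rw [Real.norm_eq_abs, abs_mul, abs_mul, abs_pow, Nat.abs_cast]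
    have hyR : |y| ≤ |t| + 1 := by
      rw [Metric.mem_ball, Real.dist_eq, sub_zero] at hy
      linarith
    exact mul_le_mul_of_nonneg_left (mul_le_mul_of_nonneg_left
      (pow_le_pow_left₀ (abs_nonneg y) hyR (n-1)) (n.cast_nonneg (α := ℝ)))
      (abs_nonneg (a σ n))

lemma a_succ (hσ : 0 ≤ σ) (m : ℕ) :
    a σ (m+1) * ((m : ℝ) + 1) = -a (σ+1) m := by
  have hg : ((m+1 : ℕ) : ℝ) + σ + 1 = (m : ℝ) + (σ + 1) + 1 := by push_cast; ring
  rw [a, a, hg]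
  have hgpos := gamma_pos (by linarith : (0:ℝ) ≤ σ + 1) m
  have hfact : ((m+1).factorial : ℝ) = ((m:ℝ)+1) * m.factorial := by
    rw [Nat.factorial_succ]; push_cast; ring
  have h4 : ((m:ℝ)+1) ≠ 0 := by positivity
  have h5 : ((m.factorial : ℝ)) ≠ 0 := by exact_mod_cast m.factorial_pos.ne'
  rw [hfact, pow_succ]
  field_simp

lemma hasDerivAt_f (hσ : 0 ≤ σ) (t : ℝ) : HasDerivAt (f σ) (-f (σ+1) t) t := by
  have h := hasDerivAt_f_aux hσ t
  have key : (∑' m : ℕ, a σ m * (m * t ^ (m - 1))) = -f (σ+1) t := by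
    rw [(summable_deriv_term hσ t).tsum_eq_zero_add]
    have h0 : a σ 0 * ((0:ℕ) * t ^ (0 - 1)) = 0 := by simp
    rw [h0, zero_add]
    have hterm : ∀ m : ℕ, a σ (m+1) * (((m+1 : ℕ) : ℝ) * t ^ ((m+1) - 1))
        = -(a (σ+1) m * t ^ m) := by
      intro m
      have : (((m+1 : ℕ)) : ℝ) = (m : ℝ) + 1 := by push_cast; ring
      rw [this]
      have h2 : (m+1) - 1 = m := rfl
      rw [h2, ← mul_assoc, a_succ hσ m]
      ring
    rw [tsum_congr hterm, tsum_neg]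
    rfl
  rwa [key] at h

end Stmt18Aux

namespace Stmt18Aux

variable {σ : ℝ}

lemma c_zero (hσ : 0 ≤ σ) : a σ 0 - (σ+1) * a (σ+1) 0 = 0 := by
  have h1 : (0:ℝ) < σ + 1 := by linarith
  have hg1 : (0:ℝ) < Real.Gamma (σ + 1) := Real.Gamma_pos_of_pos h1
  rw [a, a]
  have e1 : ((0:ℕ) : ℝ) + σ + 1 = σ + 1 := by push_cast; ring
  have e2 : ((0:ℕ) : ℝ) + (σ+1) + 1 = (σ + 1) + 1 := by push_cast; ring
  rw [e1, e2, Real.Gamma_add_one h1.ne']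
  simp only [pow_zero, Nat.factorial_zero, Nat.cast_one, one_mul]
  field_simp
  ring

lemma c_succ (hσ : 0 ≤ σ) (m : ℕ) :
    a σ (m+1) - (σ+1) * a (σ+1) (m+1) = -(a (σ+2) m) := by
  have hpos : (0:ℝ) < (m:ℝ) + σ + 2 := by
    have := m.cast_nonneg (α := ℝ); linarith
  have hg2 : (0:ℝ) < Real.Gamma ((m:ℝ) + σ + 2) :=
    Real.Gamma_pos_of_pos hpos
  rw [a, a, a]
  have e1 : ((m+1 : ℕ) : ℝ) + σ + 1 = (m:ℝ) + σ + 2 := by push_cast; ring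
  have e2 : ((m+1 : ℕ) : ℝ) + (σ+1) + 1 = ((m:ℝ) + σ + 2) + 1 := by push_cast; ring
  have e3 : ((m : ℕ) : ℝ) + (σ+2) + 1 = ((m:ℝ) + σ + 2) + 1 := by ring
  rw [e1, e2, e3, Real.Gamma_add_one hpos.ne']
  have hfact : ((m+1).factorial : ℝ) = ((m:ℝ)+1) * m.factorial := by
    rw [Nat.factorial_succ]; push_cast; ring
  have h4 : ((m:ℝ)+1) ≠ 0 := by positivity
  have h5 : ((m.factorial : ℝ)) ≠ 0 := by exact_mod_cast m.factorial_pos.ne'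
  rw [hfact, pow_succ]
  field_simp
  ring

lemma recurrence (hσ : 0 ≤ σ) (t : ℝ) :
    f σ t = (σ+1) * f (σ+1) t - t * f (σ+2) t := by
  have hσ1 : (0:ℝ) ≤ σ + 1 := by linarith
  have hσ2 : (0:ℝ) ≤ σ + 2 := by linarith
  have hs0 := summable_term hσ t
  have hs1 := (summable_term hσ1 t).mul_left (σ+1)
  have hsc : Summable (fun m : ℕ => (a σ m - (σ+1) * a (σ+1) m) * t ^ m) := by
    apply Summable.congr (hs0.sub hs1)
    intro m; ring
  have h1 : f σ t - (σ+1) * f (σ+1) t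
      = ∑' m : ℕ, (a σ m - (σ+1) * a (σ+1) m) * t ^ m := by
    rw [f, f, ← tsum_mul_left, ← hs0.tsum_sub hs1]
    congr 1; funext m; ring
  have h2 : (∑' m : ℕ, (a σ m - (σ+1) * a (σ+1) m) * t ^ m) = -(t * f (σ+2) t) := by
    rw [hsc.tsum_eq_zero_add, c_zero hσ, zero_mul, zero_add]
    have hterm : ∀ m : ℕ, (a σ (m+1) - (σ+1) * a (σ+1) (m+1)) * t ^ (m+1)
        = (-t) * (a (σ+2) m * t ^ m) := by
      intro m
      rw [c_succ hσ m, pow_succ]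
      ring
    rw [tsum_congr hterm, tsum_mul_left]
    rw [f]; ring
  linarith [h1, h2]

lemma f_zero (σ : ℝ) : f σ 0 = (Real.Gamma (σ+1))⁻¹ := by
  rw [f, tsum_eq_single 0]
  · simp [a]
  · intro m hm
    simp [zero_pow hm]

lemma continuous_f (hσ : 0 ≤ σ) : Continuous (f σ) := by
  rw [continuous_iff_continuousAt]
  exact fun t => (hasDerivAt_f hσ t).continuousAt

lemma besselJ_eq {x : ℝ} (σ : ℝ) (hx : 0 < x) :
    besselJ σ x = (x/2) ^ σ * f σ ((x/2)^2) := by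
  have hx2 : (0:ℝ) < x / 2 := by linarith
  rw [besselJ, f, ← tsum_mul_left]
  apply tsum_congr
  intro m
  have e1 : 2 * (m:ℝ) + σ = ((2*m : ℕ) : ℝ) + σ := by push_cast; ring
  rw [e1, Real.rpow_add hx2, Real.rpow_natCast, pow_mul, a]
  ring

end Stmt18Aux

namespace Stmt18Aux

variable {σ : ℝ}

lemma besselJ_ne_zero (hσ : 0 ≤ σ) {y : ℝ} (hy : y ∈ Ioo 0 (besselJZero σ)) :
    besselJ σ y ≠ 0 := by
  intro h
  have hle : besselJZero σ ≤ y :=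
    csInf_le ⟨0, fun z hz => hz.1.le⟩ ⟨hy.1, h⟩
  exact absurd hle (not_le.mpr hy.2)

lemma f_pos (hσ : 0 ≤ σ) {x : ℝ} (hx : x ∈ Ioo 0 (besselJZero σ)) :
    0 < f σ ((x/2)^2) := by
  by_contra hle
  push_neg at hle
  have hne : f σ ((x/2)^2) ≠ 0 := by
    intro h0
    exact besselJ_ne_zero hσ hx (by rw [besselJ_eq σ hx.1, h0, mul_zero])
  have hult : f σ ((x/2)^2) < 0 := lt_of_le_of_ne hle hne
  have hucont : Continuous (fun y : ℝ => f σ ((y/2)^2)) :=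
    (continuous_f hσ).comp (by continuity)
  have hu0 : (0:ℝ) < f σ ((((0:ℝ))/2)^2) := by
    rw [show ((((0:ℝ))/2)^2) = 0 by norm_num, f_zero]
    exact inv_pos.mpr (Real.Gamma_pos_of_pos (by linarith))
  have hmem : (0:ℝ) ∈ Icc (f σ ((x/2)^2)) (f σ ((((0:ℝ))/2)^2)) := ⟨hult.le, hu0.le⟩
  obtain ⟨c, hc, hc0⟩ := intermediate_value_Icc' hx.1.le hucont.continuousOn hmem
  have hc0' : f σ ((c/2)^2) = 0 := hc0
  have hcne : c ≠ 0 := by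
    intro h
    rw [h] at hc0'
    rw [hc0'] at hu0
    exact lt_irrefl _ hu0
  have hcpos : 0 < c := lt_of_le_of_ne hc.1 (Ne.symm hcne)
  have hcx : c ∈ Ioo 0 (besselJZero σ) := ⟨hcpos, lt_of_le_of_lt hc.2 hx.2⟩
  apply besselJ_ne_zero hσ hcx
  rw [besselJ_eq σ hcpos, hc0', mul_zero]

lemma f_pos' (hσ : 0 ≤ σ) {s : ℝ} (hs : 0 < s) (hs2 : 2 * Real.sqrt s < besselJZero σ) :
    0 < f σ s := by
  have hsq := Real.sqrt_pos.mpr hs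
  have hx : 2 * Real.sqrt s ∈ Ioo 0 (besselJZero σ) := ⟨by linarith, hs2⟩
  have := f_pos hσ hx
  rwa [show (2 * Real.sqrt s / 2)^2 = s by
    rw [mul_div_cancel_left₀ _ (two_ne_zero)]; exact Real.sq_sqrt hs.le] at this

lemma f1_pos (hσ : 0 ≤ σ) {x : ℝ} (hx : x ∈ Ioo 0 (besselJZero σ)) :
    0 < f (σ+1) ((x/2)^2) := by
  have hσ1 : (0:ℝ) ≤ σ + 1 := by linarith
  set t : ℝ := (x/2)^2 with ht
  have htpos : 0 < t := by rw [ht]; have hx1 := hx.1; positivity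
  set h : ℝ → ℝ := fun s => s ^ (σ+1) * f (σ+1) s with hh
  have hrcont : Continuous (fun s : ℝ => s ^ (σ+1)) :=
    continuous_iff_continuousAt.mpr fun s =>
      Real.continuousAt_rpow_const s (σ+1) (Or.inr (by linarith))
  have hcont : Continuous h := hrcont.mul (continuous_f hσ1)
  have hmono : StrictMonoOn h (Icc 0 t) := by
    apply strictMonoOn_of_deriv_pos (convex_Icc 0 t) hcont.continuousOn
    intro s hs
    rw [interior_Icc] at hs
    have hspos : 0 < s := hs.1
    have hd : HasDerivAt h ((σ+1) * s ^ σ * f (σ+1) s + s ^ (σ+1) * (-f (σ+1+1) s)) s := by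
      have h1 : HasDerivAt (fun y : ℝ => y ^ (σ+1)) ((σ+1) * s ^ (σ+1-1)) s :=
        Real.hasDerivAt_rpow_const (Or.inl hspos.ne')
      rw [show σ+1-1 = σ by ring] at h1
      exact h1.mul (hasDerivAt_f hσ1 s)
    rw [hd.deriv]
    have hrec := recurrence hσ s
    have hfσ : 0 < f σ s := by
      apply f_pos' hσ hspos
      have hlt : 2 * Real.sqrt s < x := by
        have h1 := Real.sqrt_lt_sqrt hspos.le hs.2
        have h2 : Real.sqrt t = x / 2 := by
          rw [ht, Real.sqrt_sq (by linarith [hx.1] : (0:ℝ) ≤ x/2)]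
        rw [h2] at h1
        linarith
      exact lt_trans hlt hx.2
    have hsrw : s ^ (σ+1) = s ^ σ * s := by
      rw [Real.rpow_add hspos, Real.rpow_one]
    have hsp : 0 < s ^ σ := Real.rpow_pos_of_pos hspos σ
    have e : (σ+1) * s ^ σ * f (σ+1) s + s ^ (σ+1) * (-f (σ+1+1) s)
        = s ^ σ * f σ s := by
      rw [hsrw, hrec]
      ring_nf
    rw [e]
    positivity
  have h0 : h 0 = 0 := by
    rw [hh]; simp only []
    rw [Real.zero_rpow (by linarith : σ+1 ≠ 0), zero_mul]
  have := hmono (left_mem_Icc.mpr htpos.le) (right_mem_Icc.mpr htpos.le) htpos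
  rw [h0] at this
  have htp : 0 < t ^ (σ+1) := Real.rpow_pos_of_pos htpos _
  have hbt : 0 < t ^ (σ+1) * f (σ+1) t := this
  nlinarith [hbt, htp]

end Stmt18Aux

namespace Stmt18Aux

variable {σ : ℝ}

/-- the ratio J_{σ+1}/J_σ expressed via f -/
def ρ (σ : ℝ) (x : ℝ) : ℝ := (x/2) * (f (σ+1) ((x/2)^2) / f σ ((x/2)^2))

lemma hasDerivAt_t {x : ℝ} : HasDerivAt (fun y : ℝ => (y/2)^2) (x/2) x := by
  have h := ((hasDerivAt_id x).div_const 2).pow 2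
  refine h.congr_deriv ?_
  norm_num
  ring

lemma hasDerivAt_rho (hσ : 0 ≤ σ) {x : ℝ} (hx : 0 < x)
    (hA : f σ ((x/2)^2) ≠ 0) :
    HasDerivAt (ρ σ) (1 - (2*σ+1) * (ρ σ x / x) + (ρ σ x)^2) x := by
  have hσ1 : (0:ℝ) ≤ σ + 1 := by linarith
  set t : ℝ := (x/2)^2 with ht
  set A : ℝ := f σ t with hAd
  set B : ℝ := f (σ+1) t with hBd
  set C : ℝ := f (σ+2) t with hCd
  have hfB : HasDerivAt (fun y : ℝ => f (σ+1) ((y/2)^2)) (-C * (x/2)) x := by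
    have := (hasDerivAt_f hσ1 t).comp x hasDerivAt_t
    rw [show σ + 1 + 1 = σ + 2 by ring] at this
    exact this
  have hfA : HasDerivAt (fun y : ℝ => f σ ((y/2)^2)) (-B * (x/2)) x := by
    exact (hasDerivAt_f hσ t).comp x hasDerivAt_t
  have hQ := hfB.div hfA hA
  have hhalf : HasDerivAt (fun y : ℝ => y/2) (1/2) x := (hasDerivAt_id x).div_const 2
  have hres := hhalf.mul hQ
  have hrec : A = (σ+1) * B - t * C := recurrence hσ t
  have hrec' : A = (σ+1) * B - (x/2)^2 * C := by rw [hrec, ht]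
  refine hres.congr_deriv ?_
  rw [ρ]
  simp only [Pi.div_apply, ← ht, ← hAd, ← hBd, ← hCd]
  field_simp
  rw [hrec']
  ring

lemma hasDerivAt_Phi_aux (hσ : 0 ≤ σ) {x : ℝ} (hx : 0 < x)
    (hA : f σ ((x/2)^2) ≠ 0) :
    HasDerivAt (fun y : ℝ => y ^ (2*σ) * ρ σ y)
      (x ^ (2*σ) - x⁻¹ * (x ^ (2*σ) * ρ σ x)
        + x ^ (-(2*σ)) * (x ^ (2*σ) * ρ σ x)^2) x := by
  have hp : HasDerivAt (fun y : ℝ => y ^ (2*σ)) ((2*σ) * x ^ (2*σ - 1)) x :=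
    Real.hasDerivAt_rpow_const (Or.inl hx.ne')
  have hres := hp.mul (hasDerivAt_rho hσ hx hA)
  refine hres.congr_deriv ?_
  have e1 : x ^ (2*σ - 1) = x ^ (2*σ) / x := by
    rw [Real.rpow_sub hx, Real.rpow_one]
  have e2 : x ^ (-(2*σ)) = (x ^ (2*σ))⁻¹ := Real.rpow_neg hx.le _
  rw [e1, e2]
  have hpne : x ^ (2*σ) ≠ 0 := (Real.rpow_pos_of_pos hx _).ne'
  field_simp
  ring

lemma Phi_eq (hσ : 0 ≤ σ) {Φ : ℝ → ℝ}
    (hΦ : ∀ x, Φ x = x ^ (2 * σ) * (besselJ (σ + 1) x / besselJ σ x))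
    {y : ℝ} (hy : 0 < y) : Φ y = y ^ (2*σ) * ρ σ y := by
  rw [hΦ, besselJ_eq (σ+1) hy, besselJ_eq σ hy, ρ]
  have h2 : (0:ℝ) < y/2 := by linarith
  have e1 : (y/2) ^ (σ+1) = (y/2) ^ σ * (y/2) := by
    rw [Real.rpow_add h2, Real.rpow_one]
  rw [e1]
  have hne : (y/2) ^ σ ≠ 0 := (Real.rpow_pos_of_pos h2 _).ne'
  rw [show (y/2) ^ σ * (y/2) * f (σ+1) ((y/2)^2) = (y/2) ^ σ * ((y/2) * f (σ+1) ((y/2)^2)) by ring,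
    mul_div_mul_left _ _ hne, mul_div_assoc]

end Stmt18Aux

namespace Stmt18Aux

variable {σ : ℝ}

lemma continuousAt_rho (hσ : 0 ≤ σ) {y : ℝ} (hA : f σ ((y/2)^2) ≠ 0) :
    ContinuousAt (ρ σ) y := by
  have hσ1 : (0:ℝ) ≤ σ + 1 := by linarith
  have hc : Continuous (fun y : ℝ => (y/2)^2) := by continuity
  have hB : ContinuousAt (fun y : ℝ => f (σ+1) ((y/2)^2)) y :=
    ((continuous_f hσ1).comp hc).continuousAt
  have hAc : ContinuousAt (fun y : ℝ => f σ ((y/2)^2)) y :=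
    ((continuous_f hσ).comp hc).continuousAt
  exact (continuousAt_id.div_const 2).mul (hB.div hAc hA)

lemma rho_small (hσ : 1/2 ≤ σ) :
    ∃ δ > 0, ∀ y : ℝ, 0 < y → y ≤ δ → ρ σ y < y := by
  have hσ0 : (0:ℝ) ≤ σ := by linarith
  have hσ1 : (0:ℝ) ≤ σ + 1 := by linarith
  have hc : Continuous (fun y : ℝ => (y/2)^2) := by continuity
  set q : ℝ → ℝ := fun y => f (σ+1) ((y/2)^2) / f σ ((y/2)^2) with hq
  have hA0 : f σ (((0:ℝ)/2)^2) ≠ 0 := by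
    rw [show (((0:ℝ))/2)^2 = 0 by norm_num, f_zero]
    exact (inv_pos.mpr (Real.Gamma_pos_of_pos (by linarith))).ne'
  have hqc : ContinuousAt q 0 := by
    exact (((continuous_f hσ1).comp hc).continuousAt).div
      (((continuous_f hσ0).comp hc).continuousAt) hA0
  have hq0 : q 0 < 2 := by
    have h1 : (0:ℝ) < σ + 1 := by linarith
    have hg1 : (0:ℝ) < Real.Gamma (σ + 1) := Real.Gamma_pos_of_pos h1
    have hgam : Real.Gamma (σ+1+1) = (σ+1) * Real.Gamma (σ+1) :=
      Real.Gamma_add_one h1.ne'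
    have hval : q 0 = ((σ+1) * Real.Gamma (σ+1))⁻¹ / (Real.Gamma (σ+1))⁻¹ := by
      rw [hq]
      simp only [show (((0:ℝ))/2)^2 = 0 by norm_num]
      rw [f_zero, f_zero, hgam]
    rw [hval]
    have hval2 : ((σ+1) * Real.Gamma (σ+1))⁻¹ / (Real.Gamma (σ+1))⁻¹ = (σ+1)⁻¹ := by
      field_simp
    rw [hval2]
    have h23 : (σ+1)⁻¹ ≤ (3/2 : ℝ)⁻¹ := by
      apply inv_anti₀ (by norm_num) (by linarith)
    norm_num at h23
    linarith
  have hmem : q ⁻¹' (Iio 2) ∈ nhds (0:ℝ) :=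
    hqc.preimage_mem_nhds (Iio_mem_nhds hq0)
  obtain ⟨ε, hε, hball⟩ := Metric.mem_nhds_iff.mp hmem
  refine ⟨ε/2, by linarith, fun y hy hyd => ?_⟩
  have hyb : y ∈ Metric.ball (0:ℝ) ε := by
    rw [Metric.mem_ball, Real.dist_eq, sub_zero, abs_of_pos hy]
    linarith
  have hq2 : q y < 2 := hball hyb
  have : ρ σ y = (y/2) * q y := rfl
  rw [this]
  calc (y/2) * q y < (y/2) * 2 := by
        apply mul_lt_mul_of_pos_left hq2 (by linarith)
  _ = y := by ring

lemma rho_lt (hσ : 1/2 ≤ σ) {x₀ : ℝ} (hx₀ : x₀ ∈ Ioo 0 (besselJZero σ))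
    (hx1 : x₀ < 1) : ρ σ x₀ < x₀ := by
  have hσ0 : (0:ℝ) ≤ σ := by linarith
  by_contra hcon
  push_neg at hcon
  obtain ⟨δ₀, hδ₀, hsmall⟩ := rho_small hσ
  set δ := min δ₀ (x₀/2) with hδdef
  have hδpos : 0 < δ := lt_min hδ₀ (by linarith [hx₀.1])
  have hδx : δ < x₀ := lt_of_le_of_lt (min_le_right _ _) (by linarith [hx₀.1])
  have hsmall' : ∀ y : ℝ, 0 < y → y ≤ δ → ρ σ y < y := fun y hy hyd =>
    hsmall y hy (le_trans hyd (min_le_left _ _))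
  have hfne : ∀ y ∈ Icc δ x₀, f σ ((y/2)^2) ≠ 0 := by
    intro y hy
    exact (f_pos hσ0 ⟨lt_of_lt_of_le hδpos hy.1, lt_of_le_of_lt hy.2 hx₀.2⟩).ne'
  have hρcont : ContinuousOn (ρ σ) (Icc δ x₀) := fun y hy =>
    (continuousAt_rho hσ0 (hfne y hy)).continuousWithinAt
  set K := Icc δ x₀ ∩ (fun y => ρ σ y - y) ⁻¹' (Ici 0) with hK
  have hKclosed : IsClosed K :=
    (hρcont.sub continuousOn_id).preimage_isClosed_of_isClosed isClosed_Icc isClosed_Ici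
  have hKne : x₀ ∈ K := by
    refine ⟨⟨hδx.le, le_refl _⟩, ?_⟩
    simp only [mem_preimage, mem_Ici]
    linarith
  have hKbdd : BddBelow K := ⟨δ, fun y hy => hy.1.1⟩
  set c := sInf K with hc
  have hcK : c ∈ K := hKclosed.csInf_mem ⟨x₀, hKne⟩ hKbdd
  have hcIcc : c ∈ Icc δ x₀ := hcK.1
  have hcρ : c ≤ ρ σ c := by
    have := hcK.2
    simp only [mem_preimage, mem_Ici] at this
    linarith
  have hlt : ∀ y : ℝ, δ ≤ y → y < c → ρ σ y < y := by
    intro y hy1 hy2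
    by_contra h
    push_neg at h
    have hyK : y ∈ K := by
      refine ⟨⟨hy1, le_trans hy2.le hcIcc.2⟩, ?_⟩
      simp only [mem_preimage, mem_Ici]
      linarith
    have := csInf_le hKbdd hyK
    rw [← hc] at this
    linarith
  have hδc : δ < c := by
    rcases lt_or_eq_of_le hcIcc.1 with h | h
    · exact h
    · exfalso
      have := hsmall' δ hδpos (le_refl δ)
      rw [h] at this
      linarith
  have hρc : ρ σ c = c := by
    by_contra hne
    have hlt2 : c < ρ σ c := lt_of_le_of_ne hcρ (Ne.symm hne)
    have hca : ContinuousAt (fun y => ρ σ y - y) c :=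
      (continuousAt_rho hσ0 (hfne c hcIcc)).sub continuousAt_id
    have hmem : (fun y => ρ σ y - y) ⁻¹' (Ioi 0) ∈ nhds c :=
      hca.preimage_mem_nhds (Ioi_mem_nhds (by simp; linarith))
    obtain ⟨ε, hε, hball⟩ := Metric.mem_nhds_iff.mp hmem
    set y := max δ (c - ε/2) with hy
    have hy1 : δ ≤ y := le_max_left _ _
    have hy2 : y < c := max_lt hδc (by linarith)
    have hy3 : y ∈ Metric.ball c ε := by
      rw [Metric.mem_ball, Real.dist_eq, abs_of_nonpos (by linarith)]
      have : c - ε/2 ≤ y := le_max_right _ _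
      linarith
    have hy4 := hball hy3
    simp only [mem_preimage, mem_Ioi] at hy4
    have := hlt y hy1 hy2
    linarith
  have hcpos : 0 < c := lt_trans hδpos hδc
  have hD : HasDerivAt (fun y => ρ σ y - y)
      ((1 - (2*σ+1) * (ρ σ c / c) + (ρ σ c)^2) - 1) c :=
    (hasDerivAt_rho hσ0 hcpos (hfne c hcIcc)).sub (hasDerivAt_id c)
  rw [hρc] at hD
  have hval : (1 - (2*σ+1) * (c / c) + c^2) - 1 = c^2 - (2*σ+1) := by
    rw [div_self hcpos.ne']; ring
  rw [hval] at hD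
  have hDW := hD.hasDerivWithinAt (s := Iio c)
  rw [hasDerivWithinAt_iff_tendsto_slope] at hDW
  have hsub : Iio c \ {c} = Iio c := diff_singleton_eq_self (fun h => lt_irrefl c h)
  rw [hsub] at hDW
  have hev2 : ∀ᶠ y in nhdsWithin c (Iio c), 0 ≤ slope (fun y => ρ σ y - y) c y := by
    filter_upwards [Ioo_mem_nhdsLT_of_mem (⟨hδc, le_refl c⟩ : c ∈ Ioc δ c)] with y hy
    have hylt := hlt y hy.1.le hy.2
    rw [slope_def_field]
    have hnum : (ρ σ y - y) - (ρ σ c - c) ≤ 0 := by rw [hρc]; simp; linarith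
    rw [div_nonneg_iff]
    right
    constructor
    · exact hnum
    · linarith [hy.2]
  have hge : 0 ≤ c^2 - (2*σ+1) := ge_of_tendsto hDW hev2
  have hc1 : c < 1 := lt_of_le_of_lt hcIcc.2 hx1
  nlinarith

end Stmt18Aux


open Stmt18Aux

/-- `Φ_σ(x) = x^{2σ} J_{σ+1}(x)/J_σ(x)` is positive and strictly increasing on
`(0, j_{σ,1})`, with derivative `x^{2σ} - x⁻¹ Φ_σ(x) + x^{-2σ} Φ_σ(x)²`. -/
theorem stmt18 (σ : ℝ) (hσ : 1 / 2 ≤ σ) (Φ : ℝ → ℝ)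
    (hΦ : ∀ x, Φ x = x ^ (2 * σ) * (besselJ (σ + 1) x / besselJ σ x)) :
    (∀ x ∈ Ioo 0 (besselJZero σ), 0 < Φ x) ∧
    StrictMonoOn Φ (Ioo 0 (besselJZero σ)) ∧
    ∀ x ∈ Ioo 0 (besselJZero σ),
      HasDerivAt Φ (x ^ (2 * σ) - x⁻¹ * Φ x + x ^ (-(2 * σ)) * (Φ x) ^ 2) x := by
  have hσ0 : (0:ℝ) ≤ σ := by linarith
  have hρpos : ∀ x ∈ Ioo 0 (besselJZero σ), 0 < ρ σ x := by
    intro x hx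
    have hA := f_pos hσ0 hx
    have hB := f1_pos hσ0 hx
    exact mul_pos (by linarith [hx.1]) (div_pos hB hA)
  have hΦeq : ∀ x ∈ Ioo 0 (besselJZero σ), Φ x = x ^ (2*σ) * ρ σ x := by
    intro x hx
    exact Phi_eq hσ0 hΦ hx.1
  have hder : ∀ x ∈ Ioo 0 (besselJZero σ),
      HasDerivAt Φ (x ^ (2 * σ) - x⁻¹ * Φ x + x ^ (-(2 * σ)) * (Φ x) ^ 2) x := by
    intro x hx
    have hA := (f_pos hσ0 hx).ne'
    have haux := hasDerivAt_Phi_aux hσ0 hx.1 hA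
    have hev : Φ =ᶠ[nhds x] (fun y => y ^ (2*σ) * ρ σ y) := by
      filter_upwards [Ioi_mem_nhds hx.1] with y hy
      exact Phi_eq hσ0 hΦ hy
    have hfin := haux.congr_of_eventuallyEq hev
    rw [hΦeq x hx]
    exact hfin
  have hpos : ∀ x ∈ Ioo 0 (besselJZero σ), 0 < Φ x := by
    intro x hx
    rw [hΦeq x hx]
    exact mul_pos (Real.rpow_pos_of_pos hx.1 _) (hρpos x hx)
  refine ⟨hpos, ?_, hder⟩
  apply strictMonoOn_of_deriv_pos (convex_Ioo 0 (besselJZero σ))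
  · exact fun x hx => ((hder x hx).continuousAt).continuousWithinAt
  · intro x hx
    rw [interior_Ioo] at hx
    rw [(hder x hx).deriv]
    set p := x ^ (2*σ) with hp
    set r := ρ σ x with hr
    have hppos : 0 < p := Real.rpow_pos_of_pos hx.1 _
    have hrpos : 0 < r := hρpos x hx
    have e : x ^ (2*σ) - x⁻¹ * Φ x + x ^ (-(2*σ)) * (Φ x)^2
        = p * (1 - r/x + r^2) := by
      rw [hΦeq x hx, ← hp, ← hr, Real.rpow_neg hx.1.le, ← hp]
      field_simp
    rw [e]
    apply mul_pos hppos
    rcases lt_or_ge x 1 with h1 | h1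
    · have hrx : r < x := rho_lt hσ hx h1
      have hdiv : r/x < 1 := (div_lt_one hx.1).mpr hrx
      nlinarith [sq_nonneg r]
    · have hdiv : r/x ≤ r := div_le_self hrpos.le h1
      nlinarith [sq_nonneg (r-1)]
end
end

section
/- Let σ ≥ 1/2 and define Υ_σ(x) := x · ( J_{σ+1}(x)/J_σ(x) + J_σ(x)/J_{σ+1}(x) ) for x ∈ (0, j_{σ,1}). Then Υ_σ is strictly increasing on (0, j_{σ,1}), and moreover Υ_σ(x) = 2(σ+1) + x · ( J_{σ+1}(x)/J_σ(x) − J_{σ+2}(x)/J_{σ+1}(x) ) for every x ∈ (0, j_{σ,1}). -/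
open Set

noncomputable section

def bCoeff (σ : ℝ) (m : ℕ) : ℝ :=
  (-1 : ℝ) ^ m / ((m.factorial : ℝ) * Real.Gamma ((m : ℝ) + σ + 1))

def bG (σ : ℝ) (y : ℝ) : ℝ := ∑' m : ℕ, bCoeff σ m * y ^ m

lemma bGamma_pos {σ : ℝ} (hσ : 0 ≤ σ) (m : ℕ) : 0 < Real.Gamma ((m : ℝ) + σ + 1) :=
  Real.Gamma_pos_of_pos (by positivity)

lemma bGamma_ge {σ : ℝ} (hσ : 0 ≤ σ) (m : ℕ) :
    (m.factorial : ℝ) * Real.Gamma (σ + 1) ≤ Real.Gamma ((m : ℝ) + σ + 1) := by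
  induction m with
  | zero => simp
  | succ n ih =>
      have h1 : ((n : ℝ) + σ + 1) ≠ 0 := by positivity
      have h2 : Real.Gamma ((↑(n+1) : ℝ) + σ + 1) = ((n : ℝ) + σ + 1) * Real.Gamma ((n : ℝ) + σ + 1) := by
        rw [show ((↑(n+1) : ℝ) + σ + 1) = ((n : ℝ) + σ + 1) + 1 by push_cast; ring]
        rw [Real.Gamma_add_one h1]
      rw [h2]
      have h3 : ((n+1 : ℕ) : ℝ) ≤ (n : ℝ) + σ + 1 := by push_cast; linarith
      calc ((n+1).factorial : ℝ) * Real.Gamma (σ + 1)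
          = ((n+1 : ℕ) : ℝ) * ((n.factorial : ℝ) * Real.Gamma (σ + 1)) := by
            rw [Nat.factorial_succ]; push_cast; ring
        _ ≤ ((n : ℝ) + σ + 1) * Real.Gamma ((n : ℝ) + σ + 1) := by
            apply mul_le_mul h3 ih (by positivity)
            positivity

lemma bCoeff_abs_le {σ : ℝ} (hσ : 0 ≤ σ) (m : ℕ) :
    |bCoeff σ m| ≤ (Real.Gamma (σ + 1))⁻¹ / (m.factorial : ℝ) := by
  have hΓ := bGamma_pos hσ m
  have hΓσ : 0 < Real.Gamma (σ + 1) := Real.Gamma_pos_of_pos (by linarith)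
  have hf : (0:ℝ) < (m.factorial : ℝ) := by positivity
  rw [bCoeff, abs_div, abs_pow, abs_neg, abs_one, one_pow,
    abs_of_pos (by positivity : (0:ℝ) < (m.factorial : ℝ) * Real.Gamma ((m : ℝ) + σ + 1))]
  rw [show (Real.Gamma (σ + 1))⁻¹ / (m.factorial : ℝ)
      = 1 / (Real.Gamma (σ+1) * (m.factorial : ℝ)) by field_simp]
  apply one_div_le_one_div_of_le (by positivity)
  calc Real.Gamma (σ+1) * (m.factorial : ℝ) = (m.factorial : ℝ) * Real.Gamma (σ+1) := by ring
    _ ≤ Real.Gamma ((m : ℝ) + σ + 1) := bGamma_ge hσ m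
    _ ≤ (m.factorial : ℝ) * Real.Gamma ((m : ℝ) + σ + 1) := by
        have h1 : (1:ℝ) ≤ (m.factorial : ℝ) := by
          exact_mod_cast Nat.one_le_iff_ne_zero.2 (Nat.factorial_ne_zero m)
        nlinarith

lemma bG_summable {σ : ℝ} (hσ : 0 ≤ σ) (y : ℝ) : Summable (fun m => bCoeff σ m * y ^ m) := by
  apply Summable.of_abs
  apply Summable.of_nonneg_of_le (fun m => abs_nonneg _)
    (fun m => ?_) (((Real.summable_pow_div_factorial |y|).mul_left ((Real.Gamma (σ+1))⁻¹)))
  rw [abs_mul, abs_pow]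
  calc |bCoeff σ m| * |y| ^ m ≤ (Real.Gamma (σ + 1))⁻¹ / (m.factorial : ℝ) * |y| ^ m :=
        mul_le_mul_of_nonneg_right (bCoeff_abs_le hσ m) (by positivity)
    _ = (Real.Gamma (σ+1))⁻¹ * (|y| ^ m / (m.factorial : ℝ)) := by ring
lemma bCoeff_succ_mul {σ : ℝ} (hσ : 0 ≤ σ) (m : ℕ) :
    bCoeff σ (m+1) * ((m:ℝ)+1) = - bCoeff (σ+1) m := by
  have harg : ((m+1:ℕ):ℝ) + σ + 1 = (m:ℝ) + (σ+1) + 1 := by push_cast; ring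
  have hΓ : 0 < Real.Gamma ((m:ℝ) + (σ+1) + 1) := bGamma_pos (by linarith) m
  have hfac : (0:ℝ) < ((m+1).factorial : ℝ) := by positivity
  have hfac' : (0:ℝ) < (m.factorial : ℝ) := by positivity
  rw [bCoeff, bCoeff, harg, Nat.factorial_succ]
  push_cast
  rw [pow_succ]
  field_simp

lemma bG_deriv_summable {σ : ℝ} (hσ : 0 ≤ σ) {R : ℝ} (hR : 1 ≤ R) :
    Summable (fun m : ℕ => (Real.Gamma (σ+1))⁻¹ * ((2*R)^m / (m.factorial : ℝ))) :=
  (Real.summable_pow_div_factorial (2*R)).mul_left _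

lemma bG_deriv_bound {σ : ℝ} (hσ : 0 ≤ σ) {R : ℝ} (hR : 1 ≤ R) (m : ℕ) {x : ℝ}
    (hx : |x| < R) :
    ‖bCoeff σ m * ((m:ℝ) * x ^ (m-1))‖ ≤ (Real.Gamma (σ+1))⁻¹ * ((2*R)^m / (m.factorial : ℝ)) := by
  have hR0 : (0:ℝ) < R := by linarith
  have h1 : |x| ^ (m-1) ≤ R ^ m := by
    calc |x| ^ (m-1) ≤ R ^ (m-1) := pow_le_pow_left₀ (abs_nonneg x) hx.le _
      _ ≤ R ^ m := pow_le_pow_right₀ hR (Nat.sub_le m 1)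
  have h2 : (m:ℝ) ≤ 2 ^ m := by exact_mod_cast (Nat.lt_two_pow_self (n := m)).le
  have h3 : (m:ℝ) * |x| ^ (m-1) ≤ (2*R)^m := by
    rw [mul_pow]
    exact mul_le_mul h2 h1 (by positivity) (by positivity)
  have h4 := bCoeff_abs_le hσ m
  rw [Real.norm_eq_abs, abs_mul, abs_mul, abs_of_nonneg (Nat.cast_nonneg m : (0:ℝ) ≤ (m:ℝ)), abs_pow]
  calc |bCoeff σ m| * ((m:ℝ) * |x| ^ (m-1))
      ≤ ((Real.Gamma (σ+1))⁻¹ / (m.factorial : ℝ)) * (2*R)^m := by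
        apply mul_le_mul h4 h3 (by positivity)
        positivity
    _ = (Real.Gamma (σ+1))⁻¹ * ((2*R)^m / (m.factorial : ℝ)) := by ring

lemma bG_hasDerivAt {σ : ℝ} (hσ : 0 ≤ σ) (y : ℝ) :
    HasDerivAt (bG σ) (-(bG (σ+1) y)) y := by
  set R : ℝ := |y| + 1 with hRdef
  have hR : 1 ≤ R := by have := abs_nonneg y; simp only [hRdef]; linarith
  have hy : y ∈ {x : ℝ | |x| < R} := by simp only [hRdef, mem_setOf_eq]; linarith
  have hopen : IsOpen {x : ℝ | |x| < R} := by
    have : {x : ℝ | |x| < R} = Metric.ball (0:ℝ) R := by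
      ext x; simp [Metric.mem_ball, Real.dist_eq]
    rw [this]; exact Metric.isOpen_ball
  have hsum : ∀ x : ℝ, Summable (fun m : ℕ => bCoeff σ m * ((m:ℝ) * x ^ (m-1))) := by
    intro x
    set R' : ℝ := |x| + 1 with hR'def
    have hR' : 1 ≤ R' := by have := abs_nonneg x; simp only [hR'def]; linarith
    apply Summable.of_norm
    apply Summable.of_nonneg_of_le (fun m => norm_nonneg _)
      (fun m => bG_deriv_bound hσ hR' m (by simp only [hR'def]; linarith))
      (bG_deriv_summable hσ hR')
  have key : HasDerivAt (bG σ) (∑' m : ℕ, bCoeff σ m * ((m:ℝ) * y ^ (m-1))) y := by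
    apply hasDerivAt_of_tendstoUniformlyOn hopen
      (tendstoUniformlyOn_tsum_nat (bG_deriv_summable hσ hR)
        (fun m x hx => bG_deriv_bound hσ hR m hx))
      (Filter.Eventually.of_forall ?_) (fun x _ => ((bG_summable hσ x).hasSum.tendsto_sum_nat)) hy
    intro N x hx
    exact HasDerivAt.fun_sum (fun m _ => (hasDerivAt_pow m x).const_mul (bCoeff σ m))
  have hshift : (∑' m : ℕ, bCoeff σ m * ((m:ℝ) * y ^ (m-1))) = -(bG (σ+1) y) := by
    rw [(hsum y).tsum_eq_zero_add]
    have hz : bCoeff σ 0 * (((0:ℕ):ℝ) * y ^ (0-1)) = 0 := by norm_num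
    rw [hz, zero_add]
    
    have : ∀ m : ℕ, bCoeff σ (m+1) * (((m+1:ℕ):ℝ) * y ^ ((m+1)-1))
        = -(bCoeff (σ+1) m * y ^ m) := by
      intro m
      have h := bCoeff_succ_mul hσ m
      push_cast
      try simp only [Nat.add_sub_cancel]
      calc bCoeff σ (m+1) * (((m:ℝ)+1) * y ^ m) = (bCoeff σ (m+1) * ((m:ℝ)+1)) * y ^ m := by ring
        _ = -(bCoeff (σ+1) m * y ^ m) := by rw [h]; ring
    rw [tsum_congr this, tsum_neg]
    rfl
  rwa [hshift] at key

lemma bG_continuous {σ : ℝ} (hσ : 0 ≤ σ) : Continuous (bG σ) := by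
  have h : Differentiable ℝ (bG σ) := fun y => (bG_hasDerivAt hσ y).differentiableAt
  exact h.continuous

lemma bG_zero (σ : ℝ) : bG σ 0 = (Real.Gamma (σ+1))⁻¹ := by
  rw [bG, tsum_eq_single 0]
  · simp [bCoeff]
  · intro m hm
    simp [zero_pow hm]
lemma bCoeff_zero (σ : ℝ) : bCoeff σ 0 = (Real.Gamma (σ+1))⁻¹ := by
  simp [bCoeff]

lemma bCoeff_rec {σ : ℝ} (hσ : 0 ≤ σ) (m : ℕ) :
    (σ+1) * bCoeff (σ+1) (m+1) - bCoeff σ (m+1) = bCoeff (σ+2) m := by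
  have hA : 0 < Real.Gamma ((m:ℝ) + σ + 2) := Real.Gamma_pos_of_pos (by positivity)
  have harg1 : ((m+1:ℕ):ℝ) + (σ+1) + 1 = ((m:ℝ) + σ + 2) + 1 := by push_cast; ring
  have harg2 : ((m+1:ℕ):ℝ) + σ + 1 = (m:ℝ) + σ + 2 := by push_cast; ring
  have harg3 : ((m:ℕ):ℝ) + (σ+2) + 1 = ((m:ℝ) + σ + 2) + 1 := by push_cast; ring
  have hG : Real.Gamma (((m:ℝ) + σ + 2) + 1) = ((m:ℝ) + σ + 2) * Real.Gamma ((m:ℝ) + σ + 2) :=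
    Real.Gamma_add_one (by positivity)
  have hfac : (0:ℝ) < ((m+1).factorial : ℝ) := by positivity
  have hfac' : (0:ℝ) < (m.factorial : ℝ) := by positivity
  rw [bCoeff, bCoeff, bCoeff, harg1, harg2, harg3, hG, Nat.factorial_succ]
  push_cast
  rw [pow_succ]
  field_simp
  ring

lemma bG_rec {σ : ℝ} (hσ : 0 ≤ σ) (y : ℝ) :
    bG σ y + y * bG (σ+2) y = (σ+1) * bG (σ+1) y := by
  have hs1 : Summable (fun m => (σ+1) * (bCoeff (σ+1) m * y^m)) :=
    (bG_summable (by linarith) y).mul_left _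
  have hs2 := bG_summable hσ y
  have hs3 : Summable (fun m => ((σ+1) * bCoeff (σ+1) m - bCoeff σ m) * y^m) := by
    apply Summable.congr (hs1.sub hs2)
    intro m; ring
  have key : (σ+1) * bG (σ+1) y - bG σ y
      = ∑' m : ℕ, ((σ+1) * bCoeff (σ+1) m - bCoeff σ m) * y^m := by
    rw [bG, bG, ← tsum_mul_left, ← hs1.tsum_sub hs2]
    exact tsum_congr (fun m => by ring)
  rw [hs3.tsum_eq_zero_add] at key
  have h0 : ((σ+1) * bCoeff (σ+1) 0 - bCoeff σ 0) * y^0 = 0 := by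
    rw [bCoeff_zero, bCoeff_zero]
    have : Real.Gamma ((σ+1)+1) = (σ+1) * Real.Gamma (σ+1) := Real.Gamma_add_one (by positivity)
    rw [this]
    have hΓ : 0 < Real.Gamma (σ+1) := Real.Gamma_pos_of_pos (by linarith)
    field_simp
    ring
  rw [h0, zero_add] at key
  have hsh : ∀ m : ℕ, ((σ+1) * bCoeff (σ+1) (m+1) - bCoeff σ (m+1)) * y^(m+1)
      = y * (bCoeff (σ+2) m * y^m) := by
    intro m
    rw [bCoeff_rec hσ m, pow_succ]
    ring
  rw [tsum_congr hsh, tsum_mul_left] at key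
  have hid : (∑' (m : ℕ), bCoeff (σ + 2) m * y ^ m) = bG (σ+2) y := rfl
  rw [hid] at key
  linarith [key]

lemma besselJ_eq {σ x : ℝ} (hx : 0 < x) :
    besselJ σ x = (x/2)^σ * bG σ ((x/2)^2) := by
  have hw : 0 < x/2 := by linarith
  rw [besselJ, bG, ← tsum_mul_left]
  apply tsum_congr
  intro m
  have hp : (x/2) ^ (2*(m:ℝ)+σ) = ((x/2)^2)^m * (x/2)^σ := by
    rw [Real.rpow_add hw]
    congr 1
    rw [show (2*(m:ℝ)) = ((2*m : ℕ):ℝ) by push_cast; ring, Real.rpow_natCast, pow_mul]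
  rw [hp, bCoeff]
  ring

lemma besselJ_rec {σ : ℝ} (hσ : 0 ≤ σ) {x : ℝ} (hx : 0 < x) :
    x * besselJ σ x + x * besselJ (σ+2) x = (2*σ+2) * besselJ (σ+1) x := by
  have hw : 0 < x/2 := by linarith
  rw [besselJ_eq hx, besselJ_eq hx, besselJ_eq hx]
  have e1 : (x/2)^(σ+1) = (x/2)^σ * (x/2) := Real.rpow_add_one hw.ne' σ
  have e2 : (x/2)^(σ+2) = (x/2)^σ * (x/2)^2 := by
    rw [show σ+2 = σ+1+1 by ring, Real.rpow_add_one hw.ne', e1]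
    ring
  have hrec := bG_rec hσ ((x/2)^2)
  rw [e1, e2]
  linear_combination (x * (x/2)^σ) * hrec

lemma besselJ_hasDerivAt {σ : ℝ} (hσ : 0 ≤ σ) {x : ℝ} (hx : 0 < x) :
    HasDerivAt (besselJ σ) (σ/x * besselJ σ x - besselJ (σ+1) x) x := by
  have hw : 0 < x/2 := by linarith
  have hhalf : HasDerivAt (fun t : ℝ => t/2) (1/2) x := (hasDerivAt_id x).div_const 2
  have h1 : HasDerivAt (fun t : ℝ => (t/2)^σ) (σ * (x/2)^(σ-1) * (1/2)) x := by
    have := (Real.hasDerivAt_rpow_const (x := x/2) (p := σ) (Or.inl hw.ne')).comp x hhalf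
    exact this
  have h2 : HasDerivAt (fun t : ℝ => (t/2)^2) (2 * (x/2)^1 * (1/2)) x := by
    have := hhalf.fun_pow 2
    simpa using this
  have h3 : HasDerivAt (fun t : ℝ => bG σ ((t/2)^2))
      (-(bG (σ+1) ((x/2)^2)) * (2 * (x/2)^1 * (1/2))) x := by
    have := (bG_hasDerivAt hσ ((x/2)^2)).comp x h2
    exact this
  have h4 : HasDerivAt (fun t : ℝ => (t/2)^σ * bG σ ((t/2)^2))
      ((σ * (x/2)^(σ-1) * (1/2)) * bG σ ((x/2)^2)
        + (x/2)^σ * (-(bG (σ+1) ((x/2)^2)) * (2 * (x/2)^1 * (1/2)))) x := h1.mul h3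
  have heq : besselJ σ =ᶠ[nhds x] (fun t : ℝ => (t/2)^σ * bG σ ((t/2)^2)) := by
    filter_upwards [Ioi_mem_nhds hx] with t ht
    exact besselJ_eq ht
  have h5 : HasDerivAt (besselJ σ) ((σ * (x/2)^(σ-1) * (1/2)) * bG σ ((x/2)^2)
      + (x/2)^σ * (-(bG (σ+1) ((x/2)^2)) * (2 * (x/2)^1 * (1/2)))) x :=
    h4.congr_of_eventuallyEq heq
  have e1 : (x/2)^(σ-1) = (x/2)^σ / (x/2) := by
    rw [show σ-1 = σ + (-1) by ring, Real.rpow_add hw, Real.rpow_neg_one]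
    ring
  have e2 : (x/2)^(σ+1) = (x/2)^σ * (x/2) := Real.rpow_add_one hw.ne' σ
  have hfinal : (σ * (x/2)^(σ-1) * (1/2)) * bG σ ((x/2)^2)
      + (x/2)^σ * (-(bG (σ+1) ((x/2)^2)) * (2 * (x/2)^1 * (1/2)))
      = σ/x * besselJ σ x - besselJ (σ+1) x := by
    rw [besselJ_eq hx, besselJ_eq hx, e1, e2]
    field_simp
    ring
  rwa [hfinal] at h5
open Filter Topology in
lemma firstTouch {f : ℝ → ℝ} {a b : ℝ} (hab : a ≤ b) (hf : ContinuousOn f (Icc a b))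
    (ha : 0 < f a) (hb : f b ≤ 0) :
    ∃ z ∈ Ioc a b, f z = 0 ∧ ∀ w ∈ Ico a z, 0 < f w := by
  set S : Set ℝ := Icc a b ∩ f ⁻¹' {0} with hSdef
  have hS_closed : IsClosed S := by
    apply hf.preimage_isClosed_of_isClosed isClosed_Icc isClosed_singleton
  have hne : S.Nonempty := by
    have h0 : (0:ℝ) ∈ Icc (f b) (f a) := ⟨hb, ha.le⟩
    obtain ⟨c, hc, hfc⟩ := intermediate_value_Icc' hab hf h0
    exact ⟨c, hc, hfc⟩
  have hbdd : BddBelow S := ⟨a, fun x hx => hx.1.1⟩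
  set z := sInf S with hzdef
  have hzS : z ∈ S := hS_closed.csInf_mem hne hbdd
  have hza : a < z := by
    rcases hzS with ⟨⟨hz1, _⟩, hz0⟩
    rcases lt_or_eq_of_le hz1 with h | h
    · exact h
    · exfalso; rw [← h] at hz0; simp at hz0; linarith
  refine ⟨z, ⟨hza, hzS.1.2⟩, hzS.2, ?_⟩
  intro w hw
  have hwIcc : w ∈ Icc a b := ⟨hw.1, le_trans hw.2.le hzS.1.2⟩
  by_contra hneg
  push_neg at hneg
  rcases lt_or_eq_of_le hneg with h | h
  · obtain ⟨c, hc, hfc⟩ := intermediate_value_Icc' hw.1 (hf.mono (Icc_subset_Icc le_rfl hwIcc.2))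
      ⟨h.le, ha.le⟩
    have hcS : c ∈ S := ⟨⟨hc.1, le_trans hc.2 hwIcc.2⟩, hfc⟩
    have := csInf_le hbdd hcS
    have : z ≤ w := le_trans this hc.2
    exact absurd this (not_le.2 hw.2)
  · have hwS : w ∈ S := ⟨hwIcc, by simp [h.symm]⟩
    have hle := csInf_le hbdd hwS
    have : z ≤ w := hle
    linarith [hw.2]
    
open Filter Topology in
lemma deriv_nonpos_of_left_pos {g : ℝ → ℝ} {z d α : ℝ} (hg : HasDerivAt g d z) (hα : α < z)
    (hpos : ∀ w ∈ Ioo α z, 0 ≤ g w) (hz : g z = 0) : d ≤ 0 := by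
  by_contra h
  push_neg at h
  have ht := hasDerivAt_iff_tendsto_slope.1 hg
  have hev : ∀ᶠ w in 𝓝[≠] z, 0 < slope g z w := ht.eventually (eventually_gt_nhds h)
  have hev' : ∀ᶠ w in 𝓝[<] z, 0 < slope g z w :=
    hev.filter_mono (nhdsWithin_mono z (fun w hw => ne_of_lt hw))
  have hmem : Ioo α z ∈ 𝓝[<] z := Ioo_mem_nhdsLT hα
  obtain ⟨w, hw1, hw2⟩ := (hev'.and (eventually_mem_set.2 hmem)).exists
  have hslope : slope g z w = g w / (w - z) := by
    rw [slope_def_field, hz]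
    ring_nf
  rw [hslope] at hw1
  have : g w / (w - z) ≤ 0 :=
    div_nonpos_of_nonneg_of_nonpos (hpos w hw2) (by linarith [hw2.2])
  linarith

open Filter Topology in
lemma pos_right_of_deriv_pos {f : ℝ → ℝ} {d : ℝ} (hf : HasDerivAt f d 0) (h0 : f 0 = 0)
    (hd : 0 < d) : ∃ δ > 0, ∀ y : ℝ, 0 < y → y < δ → 0 < f y := by
  have ht := hasDerivAt_iff_tendsto_slope.1 hf
  have hev : ∀ᶠ w in 𝓝[≠] (0:ℝ), 0 < slope f 0 w := ht.eventually (eventually_gt_nhds hd)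
  have hev' : ∀ᶠ w in 𝓝[>] (0:ℝ), 0 < slope f 0 w :=
    hev.filter_mono (nhdsWithin_mono 0 (fun w hw => ne_of_gt hw))
  obtain ⟨u, hu, hsub⟩ := mem_nhdsGT_iff_exists_Ioo_subset.1 hev'
  refine ⟨u, hu, fun y hy1 hy2 => ?_⟩
  have hy : y ∈ Ioo (0:ℝ) u := ⟨hy1, hy2⟩
  have := hsub hy
  simp only [mem_setOf_eq, slope_def_field, h0, sub_zero] at this
  have h2 : 0 < f y / y := this
  by_contra hneg
  push_neg at hneg
  have : f y / y ≤ 0 := div_nonpos_of_nonpos_of_nonneg hneg hy1.le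
  linarith
lemma besselJ_ne_zero_of_lt {σ x : ℝ} (hx : 0 < x) (hxj : x < besselJZero σ) :
    besselJ σ x ≠ 0 := by
  intro h
  have hbdd : BddBelow {t : ℝ | 0 < t ∧ besselJ σ t = 0} := ⟨0, fun t ht => ht.1.le⟩
  have := csInf_le hbdd (⟨hx, h⟩ : x ∈ {t : ℝ | 0 < t ∧ besselJ σ t = 0})
  rw [besselJZero] at hxj
  linarith

lemma bG_surrogate_cont {σ : ℝ} (hσ : 0 ≤ σ) : Continuous (fun t : ℝ => bG σ ((t/2)^2)) :=
  (bG_continuous hσ).comp ((continuous_id.div_const 2).pow 2)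

lemma besselJ_pos_iff_bG {σ x : ℝ} (hx : 0 < x) :
    (0 < besselJ σ x ↔ 0 < bG σ ((x/2)^2)) := by
  have hW : 0 < (x/2)^σ := Real.rpow_pos_of_pos (by linarith) σ
  rw [besselJ_eq hx]
  constructor
  · intro h; nlinarith
  · intro h; positivity

lemma besselJ_pos_base {σ : ℝ} (hσ : 0 ≤ σ) {x : ℝ} (hx : 0 < x)
    (hxj : x < besselJZero σ) : 0 < besselJ σ x := by
  by_contra hneg
  push_neg at hneg
  have hne := besselJ_ne_zero_of_lt hx hxj
  have hG0 : 0 < bG σ ((0/2)^2) := by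
    have h00 : ((0:ℝ)/2)^2 = 0 := by norm_num
    rw [h00, bG_zero]
    exact inv_pos.2 (Real.Gamma_pos_of_pos (by linarith : (0:ℝ) < σ + 1))
  have hGx : bG σ ((x/2)^2) ≤ 0 := by
    by_contra hG'
    push_neg at hG'
    exact absurd ((besselJ_pos_iff_bG hx).2 hG') (not_lt.2 hneg)
  obtain ⟨z, hz, hz0, _⟩ := firstTouch hx.le ((bG_surrogate_cont hσ).continuousOn) hG0 hGx
  have hzj : z < besselJZero σ := lt_of_le_of_lt hz.2 hxj
  have : besselJ σ z = 0 := by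
    rw [besselJ_eq hz.1, hz0, mul_zero]
  exact besselJ_ne_zero_of_lt hz.1 hzj this

lemma besselJ_pos_step {σ ν : ℝ} (hν : 0 ≤ ν) {b : ℝ} (hbj : b < besselJZero σ)
    (hprev : ∀ t, 0 < t → t ≤ b → 0 < besselJ ν t) :
    ∀ x, 0 < x → x ≤ b → 0 < besselJ (ν+1) x := by
  intro x hx hxb
  by_contra hneg
  push_neg at hneg
  have hν1 : (0:ℝ) ≤ ν + 1 := by linarith
  have hG0 : 0 < bG (ν+1) ((0/2)^2) := by
    have h00 : ((0:ℝ)/2)^2 = 0 := by norm_num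
    rw [h00, bG_zero]
    exact inv_pos.2 (Real.Gamma_pos_of_pos (by linarith : (0:ℝ) < (ν+1) + 1))
  have hGx : bG (ν+1) ((x/2)^2) ≤ 0 := by
    by_contra hG'
    push_neg at hG'
    exact absurd ((besselJ_pos_iff_bG hx).2 hG') (not_lt.2 hneg)
  obtain ⟨z, hz, hz0, hzpos⟩ := firstTouch hx.le ((bG_surrogate_cont hν1).continuousOn) hG0 hGx
  -- besselJ (ν+1) z = 0, positive on (0, z)
  have hJz : besselJ (ν+1) z = 0 := by rw [besselJ_eq hz.1, hz0, mul_zero]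
  have hJpos : ∀ w, w ∈ Ioo (0:ℝ) z → 0 ≤ besselJ (ν+1) w := by
    intro w hw
    exact ((besselJ_pos_iff_bG hw.1).2 (hzpos w ⟨hw.1.le, hw.2⟩)).le
  -- derivative of besselJ (ν+1) at z equals besselJ ν z > 0
  have hrec := besselJ_rec hν hz.1
  have hQd := besselJ_hasDerivAt (σ := ν+1) hν1 hz.1
  have hQd' : HasDerivAt (besselJ (ν+1)) (besselJ ν z) z := by
    have harg : ν+1+1 = ν+2 := by ring
    rw [harg, hJz, mul_zero, zero_sub] at hQd
    have : -besselJ (ν+2) z = besselJ ν z := by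
      rw [hJz] at hrec
      have hzne : z ≠ 0 := ne_of_gt hz.1
      field_simp at hrec
      have h2 : z * (besselJ ν z + besselJ (ν+2) z) = 0 := by linarith
      have h3 := (mul_eq_zero.1 h2).resolve_left hzne
      linarith
    rwa [this] at hQd
  have hd_le : besselJ ν z ≤ 0 :=
    deriv_nonpos_of_left_pos hQd' hz.1 hJpos hJz
  have : 0 < besselJ ν z := hprev z hz.1 (le_trans hz.2 hxb)
  linarith
lemma besselJ1_pos {σ : ℝ} (hσ : 0 ≤ σ) {x : ℝ} (hx : 0 < x)
    (hxj : x < besselJZero σ) : 0 < besselJ (σ+1) x :=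
  besselJ_pos_step hσ hxj
    (fun t ht htb => besselJ_pos_base hσ ht (lt_of_le_of_lt htb hxj)) x hx le_rfl

lemma besselJ_hasDerivAt' {σ : ℝ} (hσ : 0 ≤ σ) {x : ℝ} (hx : 0 < x) :
    HasDerivAt (besselJ (σ+1)) (besselJ σ x - (σ+1)/x * besselJ (σ+1) x) x := by
  have hQd := besselJ_hasDerivAt (σ := σ+1) (by linarith) hx
  have harg : σ+1+1 = σ+2 := by ring
  rw [harg] at hQd
  have hrec := besselJ_rec hσ hx
  convert hQd using 1
  have hxne : x ≠ 0 := ne_of_gt hx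
  field_simp
  linarith [hrec]

lemma EE_deriv_pos {σ : ℝ} (hσ : 1/2 ≤ σ) :
    ∃ δ > 0, ∀ y : ℝ, 0 < y → y < δ →
      0 < (bG σ y)^2 + y * (bG (σ+1) y)^2 - (σ+1) * (bG σ y * bG (σ+1) y) := by
  have hσ0 : (0:ℝ) ≤ σ := by linarith
  have hσ1 : (0:ℝ) ≤ σ+1 := by linarith
  have hΓ : 0 < Real.Gamma (σ+1) := Real.Gamma_pos_of_pos (by linarith)
  have e1 : Real.Gamma (σ+1+1) = (σ+1) * Real.Gamma (σ+1) :=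
    Real.Gamma_add_one (by positivity)
  have e2 : Real.Gamma (σ+1+1+1) = (σ+1+1) * Real.Gamma (σ+1+1) :=
    Real.Gamma_add_one (by positivity)
  have h1 := bG_hasDerivAt hσ0 (0:ℝ)
  have h2 := bG_hasDerivAt hσ1 (0:ℝ)
  have hE0 : (bG σ 0)^2 + (0:ℝ) * (bG (σ+1) 0)^2 - (σ+1) * (bG σ 0 * bG (σ+1) 0) = 0 := by
    rw [bG_zero, bG_zero, e1]
    field_simp
    ring
  have hcomb := ((h1.fun_pow 2).fun_add ((hasDerivAt_id' (0:ℝ)).fun_mul (h2.fun_pow 2))).fun_sub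
    ((h1.fun_mul h2).const_mul (σ+1))
  have hEd : HasDerivAt
      (fun y => (bG σ y)^2 + y * (bG (σ+1) y)^2 - (σ+1) * (bG σ y * bG (σ+1) y))
      (((Real.Gamma (σ+1))⁻¹)^2 / ((σ+2)*(σ+1)^2)) 0 := by
    refine hcomb.congr_deriv ?_
    rw [bG_zero, bG_zero, bG_zero, e2, e1]
    norm_num only
    field_simp
    ring
  exact pos_right_of_deriv_pos hEd hE0 (by positivity)

lemma Zfact {σ : ℝ} (hσ : 1/2 ≤ σ) {x : ℝ} (hx : 0 < x) (hxj : x < besselJZero σ) :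
    (2*σ+2) * (besselJ σ x * besselJ (σ+1) x)
      < x * ((besselJ σ x)^2 + (besselJ (σ+1) x)^2) := by
  have hσ0 : (0:ℝ) ≤ σ := by linarith
  have hσ1 : (0:ℝ) ≤ σ+1 := by linarith
  by_contra hneg
  push_neg at hneg
  obtain ⟨δ, hδpos, hEsmall⟩ := EE_deriv_pos hσ
  set EE : ℝ → ℝ := fun y => (bG σ y)^2 + y * (bG (σ+1) y)^2 - (σ+1) * (bG σ y * bG (σ+1) y)
    with hEEdef
  set ZZ : ℝ → ℝ := fun t => t * ((besselJ σ t)^2 + (besselJ (σ+1) t)^2)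
    - (2*σ+2) * (besselJ σ t * besselJ (σ+1) t) with hZZdef
  have hZZeq : ∀ t : ℝ, 0 < t → ZZ t = 2*(t/2)*((t/2)^σ)^2 * EE ((t/2)^2) := by
    intro t ht
    have hw : 0 < t/2 := by linarith
    have eσ1 : (t/2)^(σ+1) = (t/2)^σ * (t/2) := Real.rpow_add_one hw.ne' σ
    simp only [hZZdef, hEEdef]
    rw [besselJ_eq ht, besselJ_eq ht, eσ1]
    ring
  have hEcont : Continuous EE := by
    have hg1 := bG_continuous hσ0
    have hg2 := bG_continuous hσ1
    rw [hEEdef]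
    exact ((hg1.pow 2).add (continuous_id.mul (hg2.pow 2))).sub
      (continuous_const.mul (hg1.mul hg2))
  have hfcont : Continuous (fun t : ℝ => EE ((t/2)^2)) :=
    hEcont.comp ((continuous_id.div_const 2).pow 2)
  set a : ℝ := min x (Real.sqrt δ) with hadef
  have ha_pos : 0 < a := lt_min hx (Real.sqrt_pos.2 hδpos)
  have ha_le : a ≤ x := min_le_left _ _
  have hfa : 0 < EE ((a/2)^2) := by
    apply hEsmall
    · positivity
    · have h1 : a ≤ Real.sqrt δ := min_le_right _ _
      have h2 : a^2 ≤ δ := by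
        calc a^2 ≤ (Real.sqrt δ)^2 := by nlinarith [ha_pos]
          _ = δ := Real.sq_sqrt hδpos.le
      nlinarith [hδpos]
  have hfx : EE ((x/2)^2) ≤ 0 := by
    by_contra hE'
    push_neg at hE'
    have hW : (0:ℝ) < 2*(x/2)*((x/2)^σ)^2 := by
      have := Real.rpow_pos_of_pos (show (0:ℝ) < x/2 by linarith) σ
      positivity
    have : 0 < ZZ x := by rw [hZZeq x hx]; positivity
    simp only [hZZdef] at this
    linarith
  obtain ⟨z, hz, hz0, hzpos⟩ := firstTouch ha_le (hfcont.continuousOn) hfa hfx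
  have hz_pos : 0 < z := lt_trans ha_pos hz.1
  have hzj : z < besselJZero σ := lt_of_le_of_lt hz.2 hxj
  have hPz : 0 < besselJ σ z := besselJ_pos_base hσ0 hz_pos hzj
  have hQz : 0 < besselJ (σ+1) z := besselJ1_pos hσ0 hz_pos hzj
  have hZz : ZZ z = 0 := by rw [hZZeq z hz_pos, hz0, mul_zero]
  have hZnonneg : ∀ w ∈ Ioo a z, 0 ≤ ZZ w := by
    intro w hw
    have hw_pos : 0 < w := lt_trans ha_pos hw.1
    have hfw : 0 < EE ((w/2)^2) := hzpos w ⟨hw.1.le, hw.2⟩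
    have hWw : (0:ℝ) < 2*(w/2)*((w/2)^σ)^2 := by
      have := Real.rpow_pos_of_pos (show (0:ℝ) < w/2 by linarith) σ
      positivity
    rw [hZZeq w hw_pos]
    positivity
  -- derivative of ZZ at z
  have hP := besselJ_hasDerivAt hσ0 hz_pos
  have hQ' := besselJ_hasDerivAt' hσ0 hz_pos
  have hcomb := ((hasDerivAt_id' z).fun_mul ((hP.fun_pow 2).fun_add (hQ'.fun_pow 2))).fun_sub
    ((hP.fun_mul hQ').const_mul (2*σ+2))
  have hZd : HasDerivAt ZZ
      (2*(besselJ (σ+1) z)^2 - ((besselJ σ z)^2 + (besselJ (σ+1) z)^2)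
        + (2*σ+2) * (besselJ σ z * besselJ (σ+1) z) / z) z := by
    rw [hZZdef]
    refine hcomb.congr_deriv ?_
    have hzne : z ≠ 0 := ne_of_gt hz_pos
    field_simp
    ring
  have hd_le := deriv_nonpos_of_left_pos hZd hz.1 hZnonneg hZz
  have hPQ : (2*σ+2) * (besselJ σ z * besselJ (σ+1) z)
      = z * ((besselJ σ z)^2 + (besselJ (σ+1) z)^2) := by
    simp only [hZZdef] at hZz
    linarith
  rw [hPQ, mul_div_assoc] at hd_le
  have hcan : z * ((besselJ σ z ^ 2 + besselJ (σ + 1) z ^ 2) / z)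
      = besselJ σ z ^ 2 + besselJ (σ+1) z ^ 2 := by
    field_simp
  rw [hcan] at hd_le
  nlinarith [hQz]
lemma CC_deriv_pos {σ : ℝ} (hσ : 1/2 ≤ σ) :
    ∃ δ > 0, ∀ y : ℝ, 0 < y → y < δ →
      0 < (σ+1) * ((bG σ y)^3 * bG (σ+1) y) - σ * (y * (bG σ y * (bG (σ+1) y)^3))
          - (bG σ y)^4 + y^2 * (bG (σ+1) y)^4 := by
  have hσ0 : (0:ℝ) ≤ σ := by linarith
  have hσ1 : (0:ℝ) ≤ σ+1 := by linarith
  have hΓ : 0 < Real.Gamma (σ+1) := Real.Gamma_pos_of_pos (by linarith)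
  have e1 : Real.Gamma (σ+1+1) = (σ+1) * Real.Gamma (σ+1) :=
    Real.Gamma_add_one (by positivity)
  have e2 : Real.Gamma (σ+1+1+1) = (σ+1+1) * Real.Gamma (σ+1+1) :=
    Real.Gamma_add_one (by positivity)
  have h1 := bG_hasDerivAt hσ0 (0:ℝ)
  have h2 := bG_hasDerivAt hσ1 (0:ℝ)
  have hC0 : (σ+1) * ((bG σ 0)^3 * bG (σ+1) 0) - σ * ((0:ℝ) * (bG σ 0 * (bG (σ+1) 0)^3))
      - (bG σ 0)^4 + (0:ℝ)^2 * (bG (σ+1) 0)^4 = 0 := by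
    rw [bG_zero, bG_zero, e1]
    field_simp
    ring
  have hcomb := (((((h1.fun_pow 3).fun_mul h2).const_mul (σ+1)).fun_sub
      (((hasDerivAt_id' (0:ℝ)).fun_mul (h1.fun_mul (h2.fun_pow 3))).const_mul σ)).fun_sub
      (h1.fun_pow 4)).fun_add (((hasDerivAt_id' (0:ℝ)).fun_pow 2).fun_mul (h2.fun_pow 4))
  have hCd : HasDerivAt
      (fun y => (σ+1) * ((bG σ y)^3 * bG (σ+1) y) - σ * (y * (bG σ y * (bG (σ+1) y)^3))
          - (bG σ y)^4 + y^2 * (bG (σ+1) y)^4)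
      (((Real.Gamma (σ+1))⁻¹)^4 / ((σ+2)*(σ+1)^3)) 0 := by
    refine hcomb.congr_deriv ?_
    rw [bG_zero, bG_zero, bG_zero, e2, e1]
    norm_num only
    field_simp
    ring
  exact pos_right_of_deriv_pos hCd hC0 (by positivity)

lemma Nfact {σ : ℝ} (hσ : 1/2 ≤ σ) {x : ℝ} (hx : 0 < x) (hxj : x < besselJZero σ) :
    0 < 2*(σ+1) * ((besselJ σ x)^3 * besselJ (σ+1) x)
        - 2*σ * (besselJ σ x * (besselJ (σ+1) x)^3)
        - x * (besselJ σ x)^4 + x * (besselJ (σ+1) x)^4 := by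
  have hσ0 : (0:ℝ) ≤ σ := by linarith
  have hσ1 : (0:ℝ) ≤ σ+1 := by linarith
  by_contra hneg
  push_neg at hneg
  obtain ⟨δ, hδpos, hCsmall⟩ := CC_deriv_pos hσ
  set CC : ℝ → ℝ := fun y => (σ+1) * ((bG σ y)^3 * bG (σ+1) y)
      - σ * (y * (bG σ y * (bG (σ+1) y)^3)) - (bG σ y)^4 + y^2 * (bG (σ+1) y)^4 with hCCdef
  set NN : ℝ → ℝ := fun t => 2*(σ+1) * ((besselJ σ t)^3 * besselJ (σ+1) t)
      - 2*σ * (besselJ σ t * (besselJ (σ+1) t)^3)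
      - t * (besselJ σ t)^4 + t * (besselJ (σ+1) t)^4 with hNNdef
  have hNNeq : ∀ t : ℝ, 0 < t → NN t = 2*(t/2)*(((t/2)^σ)^4) * CC ((t/2)^2) := by
    intro t ht
    have hw : 0 < t/2 := by linarith
    have eσ1 : (t/2)^(σ+1) = (t/2)^σ * (t/2) := Real.rpow_add_one hw.ne' σ
    simp only [hNNdef, hCCdef]
    rw [besselJ_eq ht, besselJ_eq ht, eσ1]
    ring
  have hCcont : Continuous CC := by
    have hg1 := bG_continuous hσ0
    have hg2 := bG_continuous hσ1
    rw [hCCdef]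
    exact (((continuous_const.mul ((hg1.pow 3).mul hg2)).sub
        (continuous_const.mul (continuous_id.mul (hg1.mul (hg2.pow 3))))).sub
        (hg1.pow 4)).add ((continuous_id.pow 2).mul (hg2.pow 4))
  have hfcont : Continuous (fun t : ℝ => CC ((t/2)^2)) :=
    hCcont.comp ((continuous_id.div_const 2).pow 2)
  set a : ℝ := min x (Real.sqrt δ) with hadef
  have ha_pos : 0 < a := lt_min hx (Real.sqrt_pos.2 hδpos)
  have ha_le : a ≤ x := min_le_left _ _
  have hfa : 0 < CC ((a/2)^2) := by
    apply hCsmall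
    · positivity
    · have h1 : a ≤ Real.sqrt δ := min_le_right _ _
      have h2 : a^2 ≤ δ := by
        calc a^2 ≤ (Real.sqrt δ)^2 := by nlinarith [ha_pos]
          _ = δ := Real.sq_sqrt hδpos.le
      nlinarith [hδpos]
  have hfx : CC ((x/2)^2) ≤ 0 := by
    by_contra hC'
    push_neg at hC'
    have hW : (0:ℝ) < 2*(x/2)*(((x/2)^σ)^4) := by
      have := Real.rpow_pos_of_pos (show (0:ℝ) < x/2 by linarith) σ
      positivity
    have : 0 < NN x := by rw [hNNeq x hx]; positivity
    simp only [hNNdef] at this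
    linarith
  obtain ⟨z, hz, hz0, hzpos⟩ := firstTouch ha_le (hfcont.continuousOn) hfa hfx
  have hz_pos : 0 < z := lt_trans ha_pos hz.1
  have hzj : z < besselJZero σ := lt_of_le_of_lt hz.2 hxj
  have hPz : 0 < besselJ σ z := besselJ_pos_base hσ0 hz_pos hzj
  have hQz : 0 < besselJ (σ+1) z := besselJ1_pos hσ0 hz_pos hzj
  have hZz : 0 < z * ((besselJ σ z)^2 + (besselJ (σ+1) z)^2)
      - (2*σ+2) * (besselJ σ z * besselJ (σ+1) z) := by
    have := Zfact hσ hz_pos hzj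
    linarith
  have hNz : NN z = 0 := by rw [hNNeq z hz_pos, hz0, mul_zero]
  have hNnonneg : ∀ w ∈ Ioo a z, 0 ≤ NN w := by
    intro w hw
    have hw_pos : 0 < w := lt_trans ha_pos hw.1
    have hfw : 0 < CC ((w/2)^2) := hzpos w ⟨hw.1.le, hw.2⟩
    have hWw : (0:ℝ) < 2*(w/2)*(((w/2)^σ)^4) := by
      have := Real.rpow_pos_of_pos (show (0:ℝ) < w/2 by linarith) σ
      positivity
    rw [hNNeq w hw_pos]
    positivity
  have hP := besselJ_hasDerivAt hσ0 hz_pos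
  have hQ' := besselJ_hasDerivAt' hσ0 hz_pos
  have hcomb := (((((hP.fun_pow 3).fun_mul hQ').const_mul (2*(σ+1))).fun_sub
      ((hP.fun_mul (hQ'.fun_pow 3)).const_mul (2*σ))).fun_sub
      ((hasDerivAt_id' z).fun_mul (hP.fun_pow 4))).fun_add ((hasDerivAt_id' z).fun_mul (hQ'.fun_pow 4))
  set P : ℝ := besselJ σ z with hPdef
  set Q : ℝ := besselJ (σ+1) z with hQdef
  set Zv : ℝ := z * (P^2 + Q^2) - (2*σ+2) * (P*Q) with hZvdef
  have hNd : HasDerivAt NN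
      ((2*P*Zv*(Zv + P*Q) + (2*z*P - (2*σ+3)*Q) * NN z) / (z*Q)) z := by
    rw [hNNdef]
    refine hcomb.congr_deriv ?_
    have hzne : z ≠ 0 := ne_of_gt hz_pos
    have hQne : Q ≠ 0 := ne_of_gt hQz
    simp only [hNNdef, hZvdef, hPdef, hQdef]
    norm_num only
    field_simp [show besselJ (σ+1) z ≠ 0 from hQne]
    ring
  have hd_le := deriv_nonpos_of_left_pos hNd hz.1 hNnonneg hNz
  rw [hNz, mul_zero, add_zero] at hd_le
  have hpos : 0 < (2*P*Zv*(Zv + P*Q)) / (z*Q) := by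
    apply div_pos
    · have hZPQ : 0 < Zv + P*Q := by nlinarith [mul_pos hPz hQz]
      positivity
    · positivity
  linarith

/-- `Υ_σ(x) = x (J_{σ+1}(x)/J_σ(x) + J_σ(x)/J_{σ+1}(x))` is strictly increasing
on `(0, j_{σ,1})` and equals `2(σ+1) + x (J_{σ+1}(x)/J_σ(x) - J_{σ+2}(x)/J_{σ+1}(x))` there. -/
theorem stmt19 (σ : ℝ) (hσ : 1 / 2 ≤ σ) (Υ : ℝ → ℝ)
    (hΥ : ∀ x, Υ x = x * (besselJ (σ + 1) x / besselJ σ x + besselJ σ x / besselJ (σ + 1) x)) :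
    StrictMonoOn Υ (Ioo 0 (besselJZero σ)) ∧
    ∀ x ∈ Ioo 0 (besselJZero σ),
      Υ x = 2 * (σ + 1) +
        x * (besselJ (σ + 1) x / besselJ σ x - besselJ (σ + 2) x / besselJ (σ + 1) x) := by
  have hσ0 : (0:ℝ) ≤ σ := by linarith
  by_cases hj : 0 < besselJZero σ
  swap
  · have hempty : Ioo (0:ℝ) (besselJZero σ) = ∅ := Ioo_eq_empty hj
    constructor
    · intro x hx
      rw [hempty] at hx
      exact absurd hx (notMem_empty x)
    · intro x hx
      rw [hempty] at hx
      exact absurd hx (notMem_empty x)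
  have hΥf : Υ = fun x => x * (besselJ (σ + 1) x / besselJ σ x + besselJ σ x / besselJ (σ + 1) x) :=
    funext hΥ
  have hder : ∀ x ∈ Ioo 0 (besselJZero σ),
      HasDerivAt Υ ((2*(σ+1) * ((besselJ σ x)^3 * besselJ (σ+1) x)
        - 2*σ * (besselJ σ x * (besselJ (σ+1) x)^3)
        - x * (besselJ σ x)^4 + x * (besselJ (σ+1) x)^4)
          / ((besselJ σ x * besselJ (σ+1) x)^2)) x := by
    intro x hx
    have hx0 : 0 < x := hx.1
    have hPz : 0 < besselJ σ x := besselJ_pos_base hσ0 hx0 hx.2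
    have hQz : 0 < besselJ (σ+1) x := besselJ1_pos hσ0 hx0 hx.2
    have hPne := ne_of_gt hPz
    have hQne := ne_of_gt hQz
    have hP := besselJ_hasDerivAt hσ0 hx0
    have hQ' := besselJ_hasDerivAt' hσ0 hx0
    have hcomb := (hasDerivAt_id' x).fun_mul ((hQ'.fun_div hP hPne).fun_add (hP.fun_div hQ' hQne))
    rw [hΥf]
    refine hcomb.congr_deriv ?_
    have hxne : x ≠ 0 := ne_of_gt hx0
    field_simp
    ring
  constructor
  · apply strictMonoOn_of_deriv_pos (convex_Ioo 0 (besselJZero σ))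
    · intro x hx
      exact ((hder x hx).continuousAt).continuousWithinAt
    · intro x hx
      rw [interior_Ioo] at hx
      rw [(hder x hx).deriv]
      have hx0 : 0 < x := hx.1
      have hPz : 0 < besselJ σ x := besselJ_pos_base hσ0 hx0 hx.2
      have hQz : 0 < besselJ (σ+1) x := besselJ1_pos hσ0 hx0 hx.2
      exact div_pos (Nfact hσ hx0 hx.2) (by positivity)
  · intro x hx
    have hx0 : 0 < x := hx.1
    have hPz : 0 < besselJ σ x := besselJ_pos_base hσ0 hx0 hx.2
    have hQz : 0 < besselJ (σ+1) x := besselJ1_pos hσ0 hx0 hx.2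
    have hrec := besselJ_rec hσ0 hx0
    rw [hΥ x]
    have hPne := ne_of_gt hPz
    have hQne := ne_of_gt hQz
    field_simp
    linear_combination (besselJ σ x) * hrec
end
end
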